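/- arXiv:0705.3390 — 8 statements merged into one kernel-verified Lean document; each statement's English description precedes it below -/
import Mathlib

section
/- Let (Λ,p) be a multifoliate structure on {1,…,n}. Under the canonical identification of the limit of ξ(Λ,p) with ℝ^n, a linear automorphism g of ℝ^n belongs to GL(ξ(Λ,p)) if and only if g ∈ GL(Λ,p); moreover the assignment sending g ∈ GL(Λ,p) to the family (g_α) determined by g_α ∘ pr_α = pr_α ∘ g is a group isomorphism from GL(Λ,p) onto GL(ξ(Λ,p)). -/
/-! Common definitions: projective systems of finite-dimensional real vector
spaces over a poset, their limits, the groups `GL(ξ)`, invariant subspaces,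
completeness, completions, and multifoliate structures. -/

structure ProjSys (Λ : Type) [PartialOrder Λ] where
  L : Λ → Type
  [instAddCommGroup : ∀ α, AddCommGroup (L α)]
  [instModule : ∀ α, Module ℝ (L α)]
  [instFiniteDimensional : ∀ α, FiniteDimensional ℝ (L α)]
  map : ∀ {α β : Λ}, α ≤ β → (L β →ₗ[ℝ] L α)
  map_id : ∀ α : Λ, map (le_refl α) = LinearMap.id
  map_comp : ∀ {α β γ : Λ} (h₁ : α ≤ β) (h₂ : β ≤ γ),
    (map h₁).comp (map h₂) = map (h₁.trans h₂)
  map_surj : ∀ {α β : Λ} (h : α ≤ β), Function.Surjective (map h)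

attribute [instance] ProjSys.instAddCommGroup ProjSys.instModule
  ProjSys.instFiniteDimensional

namespace ProjSys

variable {Λ : Type} [PartialOrder Λ]

/-- The limit of a projective system, as a submodule of the product. -/
def limSub (ξ : ProjSys Λ) : Submodule ℝ (∀ α, ξ.L α) where
  carrier := {x | ∀ (α β : Λ) (h : α ≤ β), ξ.map h (x β) = x α}
  add_mem' := by
    intro a b ha hb α β h
    simp only [Pi.add_apply, map_add, ha α β h, hb α β h]
  zero_mem' := by
    intro α β h
    simp only [Pi.zero_apply, map_zero]
  smul_mem' := by
    intro c a ha α β h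
    simp only [Pi.smul_apply, map_smul, ha α β h]

/-- The canonical projection from the limit to the `α`-th space. -/
def proj (ξ : ProjSys Λ) (α : Λ) : ↥ξ.limSub →ₗ[ℝ] ξ.L α :=
  (LinearMap.proj α : (∀ β, ξ.L β) →ₗ[ℝ] ξ.L α).comp ξ.limSub.subtype

/-- `GL(ξ)`: the linear automorphisms of the limit that cover automorphisms
of every space of the system. -/
def GLset (ξ : ProjSys Λ) : Set (↥ξ.limSub ≃ₗ[ℝ] ↥ξ.limSub) :=
  {f | ∀ α : Λ, ∃ fα : ξ.L α ≃ₗ[ℝ] ξ.L α,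
    ∀ x : ↥ξ.limSub, ξ.proj α (f x) = fα (ξ.proj α x)}

/-- A subspace of the limit is invariant if every element of `GL(ξ)`
maps it into itself. -/
def Invariant (ξ : ProjSys Λ) (K : Submodule ℝ ↥ξ.limSub) : Prop :=
  ∀ f ∈ ξ.GLset, ∀ x ∈ K, f x ∈ K

/-- A projective system is complete if every finite-codimensional invariant
subspace of the limit is the kernel of some canonical projection. -/
def Complete (ξ : ProjSys Λ) : Prop :=
  ∀ K : Submodule ℝ ↥ξ.limSub, ξ.Invariant K →
    FiniteDimensional ℝ (↥ξ.limSub ⧸ K) → ∃ α : Λ, K = LinearMap.ker (ξ.proj α)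

/-- The index set of the completion: all finite-codimensional invariant
subspaces, ordered by reverse inclusion. -/
def CompletionIndex (ξ : ProjSys Λ) : Type :=
  {K : Submodule ℝ ↥ξ.limSub //
    ξ.Invariant K ∧ FiniteDimensional ℝ (↥ξ.limSub ⧸ K)}

instance (ξ : ProjSys Λ) : PartialOrder ξ.CompletionIndex :=
  PartialOrder.lift (fun a => OrderDual.toDual a.1)
    (fun _ _ h => Subtype.ext (congrArg OrderDual.ofDual h))

/-- The completion of a projective system: the quotients by all
finite-codimensional invariant subspaces, with the canonical epimorphisms. -/
noncomputable def completion (ξ : ProjSys Λ) : ProjSys ξ.CompletionIndex where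
  L a := ↥ξ.limSub ⧸ a.1
  instAddCommGroup := fun _ => inferInstance
  instModule := fun _ => inferInstance
  instFiniteDimensional := fun a => a.2.2
  map := fun {a b} h => Submodule.mapQ b.1 a.1 LinearMap.id
    (by rw [Submodule.comap_id]; exact h)
  map_id := by
    intro a
    apply Submodule.linearMap_qext
    ext x
    simp [Submodule.mapQ_apply]
  map_comp := by
    intro a b c h₁ h₂
    apply Submodule.linearMap_qext
    ext x
    simp [Submodule.mapQ_apply]
  map_surj := by
    intro a b h y
    obtain ⟨x, rfl⟩ := Submodule.Quotient.mk_surjective _ y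
    exact ⟨Submodule.Quotient.mk x, by simp [Submodule.mapQ_apply]⟩

/-- An isomorphism of projective systems: an order isomorphism of the index
sets together with compatible linear isomorphisms of the spaces. -/
def Isomorphic {Λ' : Type} [PartialOrder Λ'] (ξ : ProjSys Λ)
    (ξ' : ProjSys Λ') : Prop :=
  ∃ ω : Λ ≃o Λ', ∃ ψ : ∀ α : Λ, ξ.L α ≃ₗ[ℝ] ξ'.L (ω α),
    ∀ (α β : Λ) (h : α ≤ β) (x : ξ.L β),
      ξ'.map (ω.monotone h) (ψ β x) = ψ α (ξ.map h x)

/-- Equivalence of projective systems: a linear isomorphism of the limits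
conjugating `GL(ξ)` onto `GL(ξ')` (such a conjugation is automatically a
group isomorphism). -/
def Equivalent {Λ' : Type} [PartialOrder Λ'] (ξ : ProjSys Λ)
    (ξ' : ProjSys Λ') : Prop :=
  ∃ φ : ↥ξ.limSub ≃ₗ[ℝ] ↥ξ'.limSub,
    Set.BijOn (fun f => (φ.symm.trans f).trans φ) ξ.GLset ξ'.GLset

end ProjSys

/-- `GL(Λ,p)` for a multifoliate structure `(Λ,p)` on `{1,…,n}`: the linear
automorphisms `f` of `ℝⁿ` whose matrix entries `f i j = f(e_j) i` vanish
whenever `p i ≱ p j`. -/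
def GLmf {n : ℕ} {Λ : Type} [PartialOrder Λ] (p : Fin n → Λ) :
    Set ((Fin n → ℝ) ≃ₗ[ℝ] (Fin n → ℝ)) :=
  {f | ∀ i j : Fin n, ¬ p j ≤ p i → f (Pi.single j 1) i = 0}

/-- Equivalence of multifoliate structures. -/
def MFEquiv {n : ℕ} {Λ Ω : Type} [PartialOrder Λ] [PartialOrder Ω]
    (p : Fin n → Λ) (q : Fin n → Ω) : Prop :=
  ∃ φ : (Fin n → ℝ) ≃ₗ[ℝ] (Fin n → ℝ),
    Set.BijOn (fun f => (φ.symm.trans f).trans φ) (GLmf p) (GLmf q)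

/-- The projective system `ξ(Λ,p)` associated with a multifoliate structure:
the spaces `L_α = ℝ^{H_α}`, `H_α = {i : p i ≤ α}`, with the coordinate
projections. -/
noncomputable def mfSys {n : ℕ} {Λ : Type} [PartialOrder Λ] (p : Fin n → Λ) : ProjSys Λ where
  L α := {i : Fin n // p i ≤ α} → ℝ
  instAddCommGroup := fun _ => inferInstance
  instModule := fun _ => inferInstance
  instFiniteDimensional := fun _ => inferInstance
  map := fun {α β} h => LinearMap.funLeft ℝ ℝ (fun i => ⟨i.1, i.2.trans h⟩)
  map_id := fun _ => rfl
  map_comp := fun _ _ => rfl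
  map_surj := by
    intro α β h
    apply LinearMap.funLeft_surjective_of_injective
    intro i j hij
    cases i
    cases j
    simpa using hij

/-- `ker pr_α ⊆ ℝⁿ`: the vectors vanishing on all coordinates `i` with
`p i ≤ α`. -/
def kerpr {n : ℕ} {Λ : Type} [PartialOrder Λ] (p : Fin n → Λ) (α : Λ) :
    Submodule ℝ (Fin n → ℝ) where
  carrier := {x | ∀ i : Fin n, p i ≤ α → x i = 0}
  add_mem' := by
    intro a b ha hb i hi
    simp [ha i hi, hb i hi]
  zero_mem' := by
    intro i hi
    rfl
  smul_mem' := by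
    intro c a ha i hi
    simp [ha i hi]

/-- The antichains of a poset, ordered by domination. -/
def AntichainsIn (Λ : Type) [PartialOrder Λ] : Type :=
  {A : Finset Λ // IsAntichain (· ≤ ·) (A : Set Λ)}

instance {Λ : Type} [PartialOrder Λ] : LE (AntichainsIn Λ) :=
  ⟨fun A B => ∀ a ∈ A.1, ∃ b ∈ B.1, a ≤ b⟩

/-- The `GL(Λ,p)`-invariant subspaces of `ℝⁿ`, ordered by reverse
inclusion. -/
def InvariantSubspaces {n : ℕ} {Λ : Type} [PartialOrder Λ]
    (p : Fin n → Λ) : Type :=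
  {K : Submodule ℝ (Fin n → ℝ) // ∀ g ∈ GLmf p, ∀ x ∈ K, g x ∈ K}

instance {n : ℕ} {Λ : Type} [PartialOrder Λ] (p : Fin n → Λ) :
    LE (InvariantSubspaces p) :=
  ⟨fun K K' => K'.1 ≤ K.1⟩

/-- A bundled multifoliate structure on `{1,…,n}`. -/
structure MultifoliateStructure (n : ℕ) where
  Lam : Type
  [instPO : PartialOrder Lam]
  [instFin : Finite Lam]
  p : Fin n → Lam
  surj : Function.Surjective p

attribute [instance] MultifoliateStructure.instPO MultifoliateStructure.instFin


namespace MFaux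
open scoped Classical

variable {n : ℕ} {Λ : Type} [PartialOrder Λ] (p : Fin n → Λ)

noncomputable def mfE (α : Λ) : ({i : Fin n // p i ≤ α} → ℝ) →ₗ[ℝ] (Fin n → ℝ) where
  toFun x := fun i => if h : p i ≤ α then x ⟨i, h⟩ else 0
  map_add' := by intro a b; funext i; by_cases h : p i ≤ α <;> simp [h]
  map_smul' := by intro c a; funext i; by_cases h : p i ≤ α <;> simp [h]

def mfR (α : Λ) : (Fin n → ℝ) →ₗ[ℝ] ({i : Fin n // p i ≤ α} → ℝ) :=
  LinearMap.funLeft ℝ ℝ Subtype.val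

lemma depOnly {g : (Fin n → ℝ) ≃ₗ[ℝ] (Fin n → ℝ)}
    (hg : ∀ i j : Fin n, ¬ p j ≤ p i → g (Pi.single j 1) i = 0) (α : Λ)
    (x : Fin n → ℝ) (hx : ∀ i : Fin n, p i ≤ α → x i = 0)
    (i : Fin n) (hi : p i ≤ α) : g x i = 0 := by
  have hx' : x = ∑ j : Fin n, x j • (Pi.single j 1 : Fin n → ℝ) := by
    funext k
    simp [Pi.single_apply]
  rw [hx', map_sum]
  simp only [map_smul, Finset.sum_apply, Pi.smul_apply, smul_eq_mul]
  apply Finset.sum_eq_zero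
  intro j _
  by_cases h : p j ≤ α
  · rw [hx j h]; ring
  · rw [hg i j (fun hji => h (hji.trans hi))]; ring

lemma restr_comm {g : (Fin n → ℝ) ≃ₗ[ℝ] (Fin n → ℝ)}
    (hg : ∀ i j : Fin n, ¬ p j ≤ p i → g (Pi.single j 1) i = 0) (α : Λ)
    (x : Fin n → ℝ) (i : Fin n) (hi : p i ≤ α) :
    g (mfE p α (mfR p α x)) i = g x i := by
  have h := depOnly p hg α (mfE p α (mfR p α x) - x) ?_ i hi
  · rw [map_sub] at h
    simpa [sub_eq_zero] using h
  · intro k hk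
    simp [mfE, mfR, hk]

noncomputable def mfIota : (Fin n → ℝ) ≃ₗ[ℝ] ↥(mfSys p).limSub where
  toFun x := ⟨fun α => fun i => x i.1, by intro α β h; rfl⟩
  invFun y := fun i => y.1 (p i) ⟨i, le_rfl⟩
  map_add' := by intro a b; rfl
  map_smul' := by intro c a; rfl
  left_inv := by intro x; rfl
  right_inv := by
    intro y
    apply Subtype.ext
    funext α i
    have h := y.2 (p i.1) α i.2
    calc y.1 (p i.1) ⟨i.1, le_rfl⟩ = (mfSys p).map i.2 (y.1 α) ⟨i.1, le_rfl⟩ := by rw [h]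
      _ = y.1 α i := rfl

lemma proj_eq (α : Λ) (x : ↥(mfSys p).limSub) :
    (mfSys p).proj α x = mfR p α ((mfIota p).symm x) := by
  funext i
  have h := x.2 (p i.1) α i.2
  show x.1 α i = x.1 (p i.1) ⟨i.1, le_rfl⟩
  rw [← h]
  rfl

end MFaux

/-- Under the canonical identification `ι` of `ℝⁿ` with the
limit of `ξ(Λ,p)`, a linear automorphism `g` of `ℝⁿ` belongs to
`GL(ξ(Λ,p))` iff `g ∈ GL(Λ,p)`, and `g ↦ ι ∘ g ∘ ι⁻¹` is a group
isomorphism from `GL(Λ,p)` onto `GL(ξ(Λ,p))`. -/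
theorem stmt_6 {n : ℕ} {Λ : Type} [PartialOrder Λ] [Finite Λ]
    (p : Fin n → Λ) (hp : Function.Surjective p) :
    ∃ ι : (Fin n → ℝ) ≃ₗ[ℝ] ↥(mfSys p).limSub,
      (∀ (x : Fin n → ℝ) (α : Λ) (i : {i : Fin n // p i ≤ α}),
        (mfSys p).proj α (ι x) i = x i.1) ∧
      (∀ g : (Fin n → ℝ) ≃ₗ[ℝ] (Fin n → ℝ),
        (ι.symm.trans g).trans ι ∈ (mfSys p).GLset ↔ g ∈ GLmf p) ∧
      Set.BijOn (fun g => (ι.symm.trans g).trans ι) (GLmf p)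
        ((mfSys p).GLset) := by
  classical
  set ι := MFaux.mfIota p with hι
  have hiff : ∀ g : (Fin n → ℝ) ≃ₗ[ℝ] (Fin n → ℝ),
      (ι.symm.trans g).trans ι ∈ (mfSys p).GLset ↔ g ∈ GLmf p := by
    intro g
    constructor
    · intro hmem i j hij
      obtain ⟨fα, hfα⟩ := hmem (p i)
      have h0 : (mfSys p).proj (p i) (ι (Pi.single j 1)) = 0 := by
        funext k
        show (Pi.single j (1:ℝ) : Fin n → ℝ) k.1 = 0
        exact Pi.single_eq_of_ne (fun h => hij (by rw [← h]; exact k.2)) 1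
      have h1 := hfα (ι (Pi.single j 1))
      rw [h0, map_zero] at h1
      exact congrFun h1 (⟨i, le_rfl⟩ : {k : Fin n // p k ≤ p i})
    · intro hg α
      set Fα : ({i : Fin n // p i ≤ α} → ℝ) →ₗ[ℝ] ({i : Fin n // p i ≤ α} → ℝ) :=
        (MFaux.mfR p α).comp (g.toLinearMap.comp (MFaux.mfE p α)) with hFα
      have hsurj : Function.Surjective Fα := by
        intro y
        refine ⟨MFaux.mfR p α (g.symm (MFaux.mfE p α y)), ?_⟩
        funext i
        show g (MFaux.mfE p α (MFaux.mfR p α (g.symm (MFaux.mfE p α y)))) i.1 = y i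
        rw [MFaux.restr_comm p hg α _ i.1 i.2, g.apply_symm_apply]
        simp [MFaux.mfE, i.2]
      have hbij : Function.Bijective Fα :=
        ⟨LinearMap.injective_iff_surjective.mpr hsurj, hsurj⟩
      refine ⟨LinearEquiv.ofBijective Fα hbij, ?_⟩
      intro x
      funext i
      show g (ι.symm x) i.1 = g (MFaux.mfE p α ((mfSys p).proj α x)) i.1
      rw [MFaux.proj_eq p α x]
      exact (MFaux.restr_comm p hg α _ i.1 i.2).symm
  have hconj : ∀ f : ↥(mfSys p).limSub ≃ₗ[ℝ] ↥(mfSys p).limSub,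
      (ι.symm.trans ((ι.trans f).trans ι.symm)).trans ι = f := by
    intro f
    ext x
    simp
  refine ⟨ι, fun x α i => rfl, hiff, ?_, ?_, ?_⟩
  · intro g hg
    exact (hiff g).mpr hg
  · intro g hg g' hg' h
    refine LinearEquiv.ext fun x => ?_
    have h2 := congrArg (fun e : ↥(mfSys p).limSub ≃ₗ[ℝ] ↥(mfSys p).limSub
      => ι.symm (e (ι x))) h
    simpa using h2
  · intro f hf
    refine ⟨(ι.trans f).trans ι.symm, (hiff _).mp ?_, hconj f⟩
    rw [hconj f]
    exact hf
end

section
/- If (Λ,p) and (Ω,q) are equivalent multifoliate structures on {1,…,n}, then the completed projective systems ξ̃(Λ,p) and ξ̃(Ω,q) are isomorphic as projective systems of vector spaces. -/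
section Stmt8Aux

variable {n : ℕ} {Λ : Type} [PartialOrder Λ]

/-- The canonical identification of the limit of `ξ(Λ,p)` with `ℝⁿ`. -/
noncomputable def mfPhi (p : Fin n → Λ) : ↥(mfSys p).limSub ≃ₗ[ℝ] (Fin n → ℝ) where
  toFun x := fun i => x.1 (p i) ⟨i, le_refl _⟩
  map_add' x y := rfl
  map_smul' c x := rfl
  invFun v := ⟨fun _ j => v j.1, fun _ _ _ => rfl⟩
  left_inv x := by
    apply Subtype.ext
    funext α j
    exact congrFun (x.2 (p j.1) α j.2).symm ⟨j.1, le_refl _⟩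
  right_inv v := rfl

lemma mfProj_apply (p : Fin n → Λ) (x : ↥(mfSys p).limSub) (α : Λ)
    (j : {i : Fin n // p i ≤ α}) :
    (mfSys p).proj α x j = mfPhi p x j.1 :=
  (congrFun (x.2 (p j.1) α j.2).symm ⟨j.1, le_refl _⟩).symm

/-- Restriction `ℝⁿ → L_α`. -/
noncomputable def resMap (p : Fin n → Λ) (α : Λ) :
    (Fin n → ℝ) →ₗ[ℝ] ({i : Fin n // p i ≤ α} → ℝ) :=
  LinearMap.funLeft ℝ ℝ (fun j : {i : Fin n // p i ≤ α} => j.1)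

lemma mem_kerpr_iff (p : Fin n → Λ) (α : Λ) (v : Fin n → ℝ) :
    v ∈ kerpr p α ↔ resMap p α v = 0 := by
  constructor
  · intro h
    funext j
    exact h j.1 j.2
  · intro h i hi
    exact congrFun h ⟨i, hi⟩

open Classical in
/-- Extension-by-zero `L_α → ℝⁿ`. -/
noncomputable def extMap (p : Fin n → Λ) (α : Λ) :
    ({i : Fin n // p i ≤ α} → ℝ) →ₗ[ℝ] (Fin n → ℝ) where
  toFun y := fun i => if h : p i ≤ α then y ⟨i, h⟩ else 0
  map_add' y z := by funext i; by_cases h : p i ≤ α <;> simp [h]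
  map_smul' c y := by funext i; by_cases h : p i ≤ α <;> simp [h]

lemma res_ext (p : Fin n → Λ) (α : Λ) (y : {i : Fin n // p i ≤ α} → ℝ) :
    resMap p α (extMap p α y) = y := by
  classical
  funext j
  show (if h : p j.1 ≤ α then y ⟨j.1, h⟩ else 0) = y j
  rw [dif_pos j.2]

lemma sub_ext_mem_kerpr (p : Fin n → Λ) (α : Λ) (v : Fin n → ℝ) :
    v - extMap p α (resMap p α v) ∈ kerpr p α := by
  classical
  intro i hi
  show v i - (if h : p i ≤ α then v i else 0) = 0
  rw [dif_pos hi, sub_self]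

lemma mem_GLmf_iff (p : Fin n → Λ) (g : (Fin n → ℝ) ≃ₗ[ℝ] (Fin n → ℝ)) :
    g ∈ GLmf p ↔ ∀ α : Λ, ∀ x ∈ kerpr p α, g x ∈ kerpr p α := by
  constructor
  · intro hg α x hx i hi
    have hrep : x = ∑ j : Fin n, x j • (Pi.single j 1 : Fin n → ℝ) := by
      funext k
      simp [Pi.single_apply]
    rw [hrep, map_sum]
    simp only [map_smul]
    rw [Finset.sum_apply]
    apply Finset.sum_eq_zero
    intro j _
    by_cases hj : p j ≤ α
    · simp [hx j hj]
    · have hji : ¬ p j ≤ p i := fun hc => hj (hc.trans hi)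
      simp [hg i j hji]
  · intro hg i j hij
    have hmem : (Pi.single j (1:ℝ)) ∈ kerpr p (p i) := by
      intro k hk
      have hkj : k ≠ j := by rintro rfl; exact hij hk
      simp [Pi.single_apply, hkj]
    exact hg (p i) _ hmem i (le_refl _)

lemma proj_eq_res (p : Fin n → Λ) (α : Λ) (y : ↥(mfSys p).limSub) :
    (mfSys p).proj α y = resMap p α (mfPhi p y) := by
  funext j
  rw [mfProj_apply]
  rfl

lemma mem_GLset_iff_GLmf (p : Fin n → Λ)
    (f : ↥(mfSys p).limSub ≃ₗ[ℝ] ↥(mfSys p).limSub) :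
    f ∈ (mfSys p).GLset ↔ ((mfPhi p).symm.trans f).trans (mfPhi p) ∈ GLmf p := by
  rw [mem_GLmf_iff]
  constructor
  · intro hf α x hx i hi
    obtain ⟨fα, hfα⟩ := hf α
    have h1 : (((mfPhi p).symm.trans f).trans (mfPhi p)) x i
        = (mfSys p).proj α (f ((mfPhi p).symm x)) ⟨i, hi⟩ :=
      (mfProj_apply p _ α ⟨i, hi⟩).symm
    rw [h1, hfα]
    have h2 : (mfSys p).proj α ((mfPhi p).symm x) = 0 := by
      funext j
      rw [mfProj_apply, (mfPhi p).apply_symm_apply]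
      exact hx j.1 j.2
    rw [h2, map_zero]
    rfl
  · intro hg α
    set G := ((mfPhi p).symm.trans f).trans (mfPhi p) with hGdef
    have key : ∀ v : Fin n → ℝ,
        resMap p α (G v) = resMap p α (G (extMap p α (resMap p α v))) := by
      intro v
      have hmem := hg α _ (sub_ext_mem_kerpr p α v)
      have h0 : resMap p α (G (v - extMap p α (resMap p α v))) = 0 :=
        (mem_kerpr_iff p α _).1 hmem
      rw [map_sub, map_sub, sub_eq_zero] at h0
      exact h0
    set fα0 : ({i : Fin n // p i ≤ α} → ℝ) →ₗ[ℝ] ({i : Fin n // p i ≤ α} → ℝ) :=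
      (resMap p α).comp ((G : (Fin n → ℝ) →ₗ[ℝ] (Fin n → ℝ)).comp (extMap p α))
      with hfα0
    have hcomm : ∀ v : Fin n → ℝ, resMap p α (G v) = fα0 (resMap p α v) :=
      fun v => key v
    have hsurj : Function.Surjective fα0 := by
      intro y
      refine ⟨resMap p α (G.symm (extMap p α y)), ?_⟩
      rw [← hcomm, LinearEquiv.apply_symm_apply, res_ext]
    have hinj : Function.Injective fα0 := LinearMap.injective_iff_surjective.mpr hsurj
    refine ⟨LinearEquiv.ofBijective fα0 ⟨hinj, hsurj⟩, ?_⟩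
    intro x
    rw [proj_eq_res, proj_eq_res]
    show resMap p α (mfPhi p (f x)) = fα0 (resMap p α (mfPhi p x))
    rw [← hcomm]
    have : G (mfPhi p x) = mfPhi p (f x) := by
      simp only [hGdef, LinearEquiv.trans_apply, LinearEquiv.symm_apply_apply]
    rw [this]

lemma conj_inj {M N : Type} [AddCommGroup M] [AddCommGroup N] [Module ℝ M]
    [Module ℝ N] (φ : M ≃ₗ[ℝ] N) :
    Function.Injective (fun f : M ≃ₗ[ℝ] M => (φ.symm.trans f).trans φ) := by
  intro a b hab
  ext x
  have h1 := DFunLike.congr_fun hab (φ x)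
  simp only [LinearEquiv.trans_apply, LinearEquiv.symm_apply_apply] at h1
  exact φ.injective h1

end Stmt8Aux

set_option maxHeartbeats 1600000 in
/-- Equivalent multifoliate structures have isomorphic
completed projective systems. -/
theorem stmt_8 {n : ℕ} {Λ Ω : Type} [PartialOrder Λ] [PartialOrder Ω]
    [Finite Λ] [Finite Ω]
    (p : Fin n → Λ) (q : Fin n → Ω)
    (hp : Function.Surjective p) (hq : Function.Surjective q)
    (h : MFEquiv p q) :
    (mfSys p).completion.Isomorphic (mfSys q).completion := by
  obtain ⟨φ, hφ⟩ := h
  set Ψ : ↥(mfSys p).limSub ≃ₗ[ℝ] ↥(mfSys q).limSub :=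
    ((mfPhi p).trans φ).trans (mfPhi q).symm with hΨ
  have hmf : ∀ g : (Fin n → ℝ) ≃ₗ[ℝ] (Fin n → ℝ),
      g ∈ GLmf p ↔ (φ.symm.trans g).trans φ ∈ GLmf q := by
    intro g
    constructor
    · intro hg
      exact hφ.mapsTo hg
    · intro hg
      obtain ⟨g', hg', he⟩ := hφ.surjOn hg
      exact conj_inj φ he ▸ hg'
  have hcomp : ∀ f : ↥(mfSys p).limSub ≃ₗ[ℝ] ↥(mfSys p).limSub,
      ((mfPhi q).symm.trans ((Ψ.symm.trans f).trans Ψ)).trans (mfPhi q)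
        = (φ.symm.trans (((mfPhi p).symm.trans f).trans (mfPhi p))).trans φ := by
    intro f
    ext v
    simp [hΨ]
  have hGL : ∀ f : ↥(mfSys p).limSub ≃ₗ[ℝ] ↥(mfSys p).limSub,
      f ∈ (mfSys p).GLset ↔ (Ψ.symm.trans f).trans Ψ ∈ (mfSys q).GLset := by
    intro f
    rw [mem_GLset_iff_GLmf, mem_GLset_iff_GLmf, hcomp f]
    exact hmf _
  have hGL' : ∀ g : ↥(mfSys q).limSub ≃ₗ[ℝ] ↥(mfSys q).limSub,
      g ∈ (mfSys q).GLset ↔ (Ψ.trans g).trans Ψ.symm ∈ (mfSys p).GLset := by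
    intro g
    rw [hGL ((Ψ.trans g).trans Ψ.symm)]
    have he : (Ψ.symm.trans ((Ψ.trans g).trans Ψ.symm)).trans Ψ = g := by
      ext v
      simp
    rw [he]
  have hinv : ∀ K : Submodule ℝ ↥(mfSys p).limSub, (mfSys p).Invariant K →
      (mfSys q).Invariant (K.map Ψ.toLinearMap) := by
    intro K hK g hg y hy
    obtain ⟨x, hx, rfl⟩ := Submodule.mem_map.mp hy
    have hg' := (hGL' g).1 hg
    have hx' := hK _ hg' x hx
    refine Submodule.mem_map.2 ⟨(Ψ.trans g).trans Ψ.symm x, hx', ?_⟩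
    simp
  have hinv' : ∀ K : Submodule ℝ ↥(mfSys q).limSub, (mfSys q).Invariant K →
      (mfSys p).Invariant (K.map Ψ.symm.toLinearMap) := by
    intro K hK f hf y hy
    obtain ⟨x, hx, rfl⟩ := Submodule.mem_map.mp hy
    have hf' := (hGL f).1 hf
    have hx' := hK _ hf' x hx
    refine Submodule.mem_map.2 ⟨(Ψ.symm.trans f).trans Ψ x, hx', ?_⟩
    simp
  have hfd : ∀ K : Submodule ℝ ↥(mfSys p).limSub,
      FiniteDimensional ℝ (↥(mfSys p).limSub ⧸ K) →
      FiniteDimensional ℝ (↥(mfSys q).limSub ⧸ K.map Ψ.toLinearMap) := by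
    intro K hKfd
    exact (Submodule.Quotient.equiv K (K.map Ψ.toLinearMap) Ψ rfl).finiteDimensional
  have hfd' : ∀ K : Submodule ℝ ↥(mfSys q).limSub,
      FiniteDimensional ℝ (↥(mfSys q).limSub ⧸ K) →
      FiniteDimensional ℝ (↥(mfSys p).limSub ⧸ K.map Ψ.symm.toLinearMap) := by
    intro K hKfd
    exact (Submodule.Quotient.equiv K (K.map Ψ.symm.toLinearMap) Ψ.symm rfl).finiteDimensional
  refine ⟨{ toFun := fun a => ⟨a.1.map Ψ.toLinearMap, hinv _ a.2.1, hfd _ a.2.2⟩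
            invFun := fun b => ⟨b.1.map Ψ.symm.toLinearMap, hinv' _ b.2.1, hfd' _ b.2.2⟩
            left_inv := fun a => Subtype.ext ((Submodule.map_symm_eq_iff Ψ).mpr rfl)
            right_inv := fun b => Subtype.ext ((Submodule.map_symm_eq_iff Ψ.symm).mpr rfl)
            map_rel_iff' := by
              intro a b
              exact Submodule.map_le_map_iff_of_injective Ψ.injective b.1 a.1 },
          fun a => Submodule.Quotient.equiv a.1 (a.1.map Ψ.toLinearMap) Ψ rfl, ?_⟩
  intro a b hab x
  obtain ⟨y, rfl⟩ := Submodule.Quotient.mk_surjective _ x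
  rfl
end

section
/- If (Λ,p) and (Ω,q) are multifoliate structures on {1,…,n} whose completed projective systems ξ̃(Λ,p) and ξ̃(Ω,q) are equivalent, then the multifoliate structures (Λ,p) and (Ω,q) are equivalent. -/
namespace Stmt9Aux

open ProjSys Function

variable {n : ℕ} {Λ : Type} [PartialOrder Λ] (p : Fin n → Λ)

/-- Restriction of a vector in `ℝⁿ` to the coordinates `H_α`. -/
def resMap (α : Λ) : (Fin n → ℝ) →ₗ[ℝ] ((mfSys p).L α) :=
  LinearMap.funLeft ℝ ℝ (fun i : {i : Fin n // p i ≤ α} => i.1)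

noncomputable def iotaFun : (Fin n → ℝ) →ₗ[ℝ] (∀ α, (mfSys p).L α) :=
  LinearMap.pi (fun α => resMap p α)

lemma iota_mem (x : Fin n → ℝ) : iotaFun p x ∈ (mfSys p).limSub := by
  intro α β h
  rfl

/-- The canonical identification of `ℝⁿ` with the limit of `ξ(Λ,p)`. -/
noncomputable def iota : (Fin n → ℝ) ≃ₗ[ℝ] ↥(mfSys p).limSub where
  toFun x := ⟨iotaFun p x, iota_mem p x⟩
  map_add' x y := Subtype.ext ((iotaFun p).map_add x y)
  map_smul' c x := Subtype.ext ((iotaFun p).map_smul c x)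
  invFun y := fun i => y.1 (p i) ⟨i, le_rfl⟩
  left_inv x := rfl
  right_inv y := by
    apply Subtype.ext
    funext α i
    have := congrFun (y.2 (p i.1) α i.2) ⟨i.1, le_rfl⟩
    exact this.symm

lemma glmf_apply_ker {f : (Fin n → ℝ) ≃ₗ[ℝ] (Fin n → ℝ)} (hf : f ∈ GLmf p)
    {α : Λ} {x : Fin n → ℝ} (hx : ∀ j, p j ≤ α → x j = 0)
    {i : Fin n} (hi : p i ≤ α) : f x i = 0 := by
  have hrep : x = ∑ j, x j • (Pi.single j 1 : Fin n → ℝ) := by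
    funext k
    simp [Finset.sum_apply, Pi.single_apply]
  have : f x i = ∑ j, x j • (f (Pi.single j (1 : ℝ))) i := by
    conv_lhs => rw [hrep]
    simp [Finset.sum_apply]
  rw [this]
  refine Finset.sum_eq_zero fun j _ => ?_
  by_cases hj : p j ≤ α
  · rw [hx j hj, zero_smul]
  · have hji : ¬ p j ≤ p i := fun hc => hj (hc.trans hi)
    rw [hf i j hji, smul_zero]

open Classical in
noncomputable def extMap (α : Λ) : ((mfSys p).L α) →ₗ[ℝ] (Fin n → ℝ) where
  toFun u j := if h : p j ≤ α then u ⟨j, h⟩ else 0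
  map_add' u v := by funext j; by_cases h : p j ≤ α <;> simp [h] <;> rfl
  map_smul' c u := by funext j; by_cases h : p j ≤ α <;> simp [h] <;> rfl

lemma res_ext (α : Λ) (u : (mfSys p).L α) : resMap p α (extMap p α u) = u := by
  classical
  funext i
  show (if h : p i.1 ≤ α then u ⟨i.1, h⟩ else 0) = u i
  rw [dif_pos i.2]

lemma res_comm {f : (Fin n → ℝ) ≃ₗ[ℝ] (Fin n → ℝ)} (hf : f ∈ GLmf p) (α : Λ)
    (y : Fin n → ℝ) :
    resMap p α (f (extMap p α (resMap p α y))) = resMap p α (f y) := by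
  funext i
  have hz : ∀ j, p j ≤ α → (extMap p α (resMap p α y) - y) j = 0 := by
    intro j hj
    classical
    show (if h : p j ≤ α then resMap p α y ⟨j, h⟩ else 0) - y j = 0
    rw [dif_pos hj]
    exact sub_self (y j)
  have h0 := glmf_apply_ker p hf hz i.2
  rw [map_sub] at h0
  simp only [Pi.sub_apply, sub_eq_zero] at h0
  exact h0

noncomputable def glA (f : (Fin n → ℝ) ≃ₗ[ℝ] (Fin n → ℝ)) (α : Λ) :
    ((mfSys p).L α) →ₗ[ℝ] ((mfSys p).L α) :=
  (resMap p α).comp ((f : (Fin n → ℝ) →ₗ[ℝ] (Fin n → ℝ)).comp (extMap p α))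

lemma glA_surj {f : (Fin n → ℝ) ≃ₗ[ℝ] (Fin n → ℝ)} (hf : f ∈ GLmf p) (α : Λ) :
    Surjective (glA p f α) := by
  intro v
  refine ⟨resMap p α (f.symm (extMap p α v)), ?_⟩
  show resMap p α (f (extMap p α (resMap p α (f.symm (extMap p α v))))) = v
  rw [res_comm p hf α, f.apply_symm_apply, res_ext]

lemma conj_iota_mem_GLset {f : (Fin n → ℝ) ≃ₗ[ℝ] (Fin n → ℝ)} (hf : f ∈ GLmf p) :
    ((iota p).symm.trans f).trans (iota p) ∈ (mfSys p).GLset := by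
  intro α
  refine ⟨LinearEquiv.ofBijective (glA p f α)
    ⟨(LinearMap.injective_iff_surjective).mpr (glA_surj p hf α), glA_surj p hf α⟩, ?_⟩
  intro x
  obtain ⟨y, rfl⟩ : ∃ y, x = iota p y := ⟨(iota p).symm x, ((iota p).apply_symm_apply x).symm⟩
  show resMap p α (f ((iota p).symm (iota p y))) = glA p f α (resMap p α y)
  rw [(iota p).symm_apply_apply]
  exact (res_comm p hf α y).symm

noncomputable instance : FiniteDimensional ℝ ↥(mfSys p).limSub :=
  LinearEquiv.finiteDimensional (iota p)

noncomputable def botIdx : (mfSys p).CompletionIndex :=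
  ⟨⊥, fun f _ x hx => by
      rw [Submodule.mem_bot] at hx ⊢
      rw [hx, map_zero], inferInstance⟩

lemma le_botIdx (a : (mfSys p).CompletionIndex) : a ≤ botIdx p :=
  (bot_le : (⊥ : Submodule ℝ ↥(mfSys p).limSub) ≤ a.1)

noncomputable def PsiFun : (Fin n → ℝ) →ₗ[ℝ] ↥(mfSys p).completion.limSub where
  toFun x := ⟨fun a => Submodule.Quotient.mk (iota p x), by
    intro a b hab
    simp [ProjSys.completion, Submodule.mapQ_apply]
    rfl⟩
  map_add' x y := by
    apply Subtype.ext
    funext a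
    simp only [map_add]
    rfl
  map_smul' c x := by
    apply Subtype.ext
    funext a
    simp only [map_smul]
    rfl

noncomputable def Psi : (Fin n → ℝ) ≃ₗ[ℝ] ↥(mfSys p).completion.limSub :=
  { PsiFun p with
    invFun := fun y => (iota p).symm ((Submodule.quotEquivOfEqBot ⊥ rfl) (y.1 (botIdx p))),
    left_inv := fun x => by
      show (iota p).symm ((Submodule.quotEquivOfEqBot ⊥ rfl)
        (Submodule.Quotient.mk (iota p x))) = x
      rw [Submodule.quotEquivOfEqBot_apply_mk, (iota p).symm_apply_apply]
    right_inv := fun y => by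
      apply Subtype.ext
      funext a
      set z := (Submodule.quotEquivOfEqBot (⊥ : Submodule ℝ ↥(mfSys p).limSub) rfl)
        (y.1 (botIdx p)) with hz
      show Submodule.Quotient.mk (iota p ((iota p).symm z)) = y.1 a
      rw [(iota p).apply_symm_apply]
      have hbot : Submodule.Quotient.mk z = y.1 (botIdx p) := by
        obtain ⟨w, hw⟩ := Submodule.Quotient.mk_surjective
          (⊥ : Submodule ℝ ↥(mfSys p).limSub) (y.1 (botIdx p))
        rw [hz, ← hw, Submodule.quotEquivOfEqBot_apply_mk]
        rfl
      have := congrArg ((mfSys p).completion.map (le_botIdx p a)) hbot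
      rw [y.2 a (botIdx p) (le_botIdx p a)] at this
      rw [← this]
      simp [ProjSys.completion, Submodule.mapQ_apply]
      rfl }

lemma Psi_coe_apply (x : Fin n → ℝ) (a : (mfSys p).CompletionIndex) :
    (Psi p x).1 a = Submodule.Quotient.mk (iota p x) := rfl

noncomputable def kerIdx (α : Λ) : (mfSys p).CompletionIndex :=
  ⟨LinearMap.ker ((mfSys p).proj α),
    fun f hf x hx => by
      obtain ⟨fα, hfα⟩ := hf α
      rw [LinearMap.mem_ker] at hx ⊢
      rw [hfα, hx, map_zero],
    inferInstance⟩

lemma mem_GLmf_of_conj {F : ↥(mfSys p).completion.limSub ≃ₗ[ℝ] ↥(mfSys p).completion.limSub}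
    (hF : F ∈ (mfSys p).completion.GLset) :
    ((Psi p).trans F).trans (Psi p).symm ∈ GLmf p := by
  intro i j hij
  set f : (Fin n → ℝ) ≃ₗ[ℝ] (Fin n → ℝ) := ((Psi p).trans F).trans (Psi p).symm with hfdef
  obtain ⟨Fa, hFa⟩ := hF (kerIdx p (p i))
  have h1 : (mfSys p).completion.proj (kerIdx p (p i)) (Psi p (Pi.single j 1)) = 0 := by
    show Submodule.Quotient.mk (iota p (Pi.single j 1)) = 0
    rw [Submodule.Quotient.mk_eq_zero]
    show (mfSys p).proj (p i) (iota p (Pi.single j 1)) = 0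
    funext k
    show (Pi.single j 1 : Fin n → ℝ) k.1 = 0
    refine Pi.single_eq_of_ne (fun hc => hij ?_) 1
    rw [← hc]; exact k.2
  have h2 := hFa (Psi p (Pi.single j 1))
  rw [h1, map_zero] at h2
  have h3 : Psi p (f (Pi.single j 1)) = F (Psi p (Pi.single j 1)) := by
    rw [hfdef]
    simp [LinearEquiv.trans_apply]
  have h4 : (mfSys p).completion.proj (kerIdx p (p i)) (Psi p (f (Pi.single j 1))) = 0 := by
    rw [h3]; exact h2
  have h5 : iota p (f (Pi.single j 1)) ∈ LinearMap.ker ((mfSys p).proj (p i)) := by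
    rw [← Submodule.Quotient.mk_eq_zero]
    exact h4
  rw [LinearMap.mem_ker] at h5
  have := congrFun h5 ⟨i, le_rfl⟩
  exact this

lemma conj_Psi_mem_GLset {f : (Fin n → ℝ) ≃ₗ[ℝ] (Fin n → ℝ)} (hf : f ∈ GLmf p) :
    ((Psi p).symm.trans f).trans (Psi p) ∈ (mfSys p).completion.GLset := by
  intro a
  set g : ↥(mfSys p).limSub ≃ₗ[ℝ] ↥(mfSys p).limSub :=
    ((iota p).symm.trans f).trans (iota p) with hg
  have hgGL := conj_iota_mem_GLset p hf
  have hmap : a.1 ≤ a.1.comap (g : ↥(mfSys p).limSub →ₗ[ℝ] ↥(mfSys p).limSub) :=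
    fun x hx => a.2.1 g hgGL x hx
  set A := Submodule.mapQ a.1 a.1 (g : ↥(mfSys p).limSub →ₗ[ℝ] ↥(mfSys p).limSub) hmap with hA
  have hsurj : Surjective A := by
    intro v
    obtain ⟨w, rfl⟩ := Submodule.Quotient.mk_surjective _ v
    refine ⟨Submodule.Quotient.mk (g.symm w), ?_⟩
    rw [hA, Submodule.mapQ_apply]
    simp
  haveI : FiniteDimensional ℝ (↥(mfSys p).limSub ⧸ a.1) := a.2.2
  refine ⟨LinearEquiv.ofBijective A
    ⟨(LinearMap.injective_iff_surjective).mpr hsurj, hsurj⟩, ?_⟩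
  intro x
  obtain ⟨y, rfl⟩ : ∃ y, x = Psi p y := ⟨(Psi p).symm x, ((Psi p).apply_symm_apply x).symm⟩
  have hconj : ((Psi p).symm.trans f).trans (Psi p) (Psi p y) = Psi p (f y) := by
    simp [LinearEquiv.trans_apply]
  rw [hconj]
  show Submodule.Quotient.mk (iota p (f y)) = A (Submodule.Quotient.mk (iota p y))
  rw [hA, Submodule.mapQ_apply]
  have hge : (g : ↥(mfSys p).limSub →ₗ[ℝ] ↥(mfSys p).limSub) (iota p y) = iota p (f y) := by
    rw [hg]
    simp only [LinearEquiv.coe_coe, LinearEquiv.trans_apply, LinearEquiv.symm_apply_apply]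
  rw [hge]

lemma conj_deconj {V W : Type} [AddCommGroup V] [Module ℝ V] [AddCommGroup W] [Module ℝ W]
    (e : V ≃ₗ[ℝ] W) (g : W ≃ₗ[ℝ] W) :
    (e.symm.trans ((e.trans g).trans e.symm)).trans e = g := by
  ext x
  simp [LinearEquiv.trans_apply]

lemma conj_injective {V W : Type} [AddCommGroup V] [Module ℝ V] [AddCommGroup W] [Module ℝ W]
    (e : V ≃ₗ[ℝ] W) :
    Injective (fun f : V ≃ₗ[ℝ] V => (e.symm.trans f).trans e) := by
  intro f1 f2 hEq
  ext x
  have h1 := congrArg (fun g : W ≃ₗ[ℝ] W => e.symm (g (e x))) hEq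
  simpa [LinearEquiv.trans_apply] using h1

lemma mem_GLmf_iff (f : (Fin n → ℝ) ≃ₗ[ℝ] (Fin n → ℝ)) :
    f ∈ GLmf p ↔ ((Psi p).symm.trans f).trans (Psi p) ∈ (mfSys p).completion.GLset := by
  constructor
  · exact conj_Psi_mem_GLset p
  · intro hF
    have h1 := mem_GLmf_of_conj p hF
    have h2 : ((Psi p).trans (((Psi p).symm.trans f).trans (Psi p))).trans (Psi p).symm = f := by
      ext x
      simp [LinearEquiv.trans_apply]
    rwa [h2] at h1

end Stmt9Aux

/-- If the completed projective systems of two multifoliate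
structures are equivalent, then the multifoliate structures are
equivalent. -/
theorem stmt_9 {n : ℕ} {Λ Ω : Type} [PartialOrder Λ] [PartialOrder Ω]
    [Finite Λ] [Finite Ω]
    (p : Fin n → Λ) (q : Fin n → Ω)
    (hp : Function.Surjective p) (hq : Function.Surjective q)
    (h : (mfSys p).completion.Equivalent (mfSys q).completion) :
    MFEquiv p q := by
  obtain ⟨φ, hφ⟩ := h
  set Φ : (Fin n → ℝ) ≃ₗ[ℝ] (Fin n → ℝ) :=
    ((Stmt9Aux.Psi p).trans φ).trans (Stmt9Aux.Psi q).symm with hΦ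
  have key : ∀ f : (Fin n → ℝ) ≃ₗ[ℝ] (Fin n → ℝ),
      ((Stmt9Aux.Psi q).symm.trans ((Φ.symm.trans f).trans Φ)).trans (Stmt9Aux.Psi q)
      = (φ.symm.trans (((Stmt9Aux.Psi p).symm.trans f).trans (Stmt9Aux.Psi p))).trans φ := by
    intro f
    ext x
    simp [hΦ, LinearEquiv.trans_apply]
  refine ⟨Φ, ?_, ?_, ?_⟩
  · intro f hf
    have h1 := (Stmt9Aux.mem_GLmf_iff p f).mp hf
    have h2 := hφ.mapsTo h1
    show (Φ.symm.trans f).trans Φ ∈ GLmf q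
    rw [Stmt9Aux.mem_GLmf_iff q, key f]
    exact h2
  · intro f1 _ f2 _ hEq
    exact Stmt9Aux.conj_injective Φ hEq
  · intro g hg
    have hq' := (Stmt9Aux.mem_GLmf_iff q g).mp hg
    obtain ⟨Fp, hFpmem, hFpeq⟩ := hφ.surjOn hq'
    set f : (Fin n → ℝ) ≃ₗ[ℝ] (Fin n → ℝ) :=
      ((Stmt9Aux.Psi p).trans Fp).trans (Stmt9Aux.Psi p).symm with hf
    have hfconj : ((Stmt9Aux.Psi p).symm.trans f).trans (Stmt9Aux.Psi p) = Fp := by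
      rw [hf]; exact Stmt9Aux.conj_deconj _ _
    have hfmem : f ∈ GLmf p := by
      rw [Stmt9Aux.mem_GLmf_iff p, hfconj]; exact hFpmem
    refine ⟨f, hfmem, ?_⟩
    show (Φ.symm.trans f).trans Φ = g
    refine Stmt9Aux.conj_injective (Stmt9Aux.Psi q) ?_
    show ((Stmt9Aux.Psi q).symm.trans ((Φ.symm.trans f).trans Φ)).trans (Stmt9Aux.Psi q)
      = ((Stmt9Aux.Psi q).symm.trans g).trans (Stmt9Aux.Psi q)
    rw [key f, hfconj]
    exact hFpeq
end

section
/- Let (Λ,p) be a multifoliate structure on {1,…,n}. A linear subspace K ⊆ ℝ^n is invariant under every element of GL(Λ,p) if and only if K = ker pr_{α_1} ∩ … ∩ ker pr_{α_k} for some finite set of pairwise incomparable elements α_1, …, α_k ∈ Λ (with the empty intersection understood as ℝ^n), where ker pr_α = {x ∈ ℝ^n : x^i = 0 for all i with p(i) ≤ α}. -/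
open Finset

lemma gl_apply {n : ℕ} (g : (Fin n → ℝ) ≃ₗ[ℝ] (Fin n → ℝ)) (x : Fin n → ℝ) (i : Fin n) :
    g x i = ∑ j, x j * g (Pi.single j 1) i := by
  have hx : x = ∑ j, x j • (Pi.single j 1 : Fin n → ℝ) := by
    funext k
    simp [Finset.sum_apply, Pi.single_apply]
  conv_lhs => rw [hx]
  simp [Finset.sum_apply]

noncomputable def transv {n : ℕ} (i j : Fin n) (hij : i ≠ j) :
    (Fin n → ℝ) ≃ₗ[ℝ] (Fin n → ℝ) :=
  LinearEquiv.ofLinear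
    (LinearMap.id + LinearMap.smulRight (LinearMap.proj i) (Pi.single j 1 : Fin n → ℝ))
    (LinearMap.id - LinearMap.smulRight (LinearMap.proj i) (Pi.single j 1 : Fin n → ℝ))
    (by apply LinearMap.ext; intro x; funext k; simp [Pi.single_apply, Ne.symm hij])
    (by apply LinearMap.ext; intro x; funext k; simp [Pi.single_apply, Ne.symm hij])

lemma transv_apply {n : ℕ} (i j : Fin n) (hij : i ≠ j) (x : Fin n → ℝ) :
    transv i j hij x = x + x i • (Pi.single j 1 : Fin n → ℝ) := rfl

noncomputable def scaleAt {n : ℕ} (i : Fin n) :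
    (Fin n → ℝ) ≃ₗ[ℝ] (Fin n → ℝ) :=
  LinearEquiv.piCongrRight (fun j =>
    if j = i then LinearEquiv.smulOfNeZero ℝ ℝ 2 two_ne_zero else LinearEquiv.refl ℝ ℝ)

lemma scaleAt_apply {n : ℕ} (i : Fin n) (x : Fin n → ℝ) (k : Fin n) :
    scaleAt i x k = (if k = i then 2 else 1) * x k := by
  by_cases h : k = i <;>
    simp [scaleAt, h, LinearEquiv.smulOfNeZero, LinearEquiv.smulOfUnit,
      DistribMulAction.toLinearEquiv, smul_eq_mul]

/-- A subspace `K ⊆ ℝⁿ` is invariant under every element of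
`GL(Λ,p)` iff it is the intersection of the `ker pr_α` over a finite set of
pairwise incomparable elements of `Λ` (the empty intersection being `ℝⁿ`). -/
theorem stmt_11 {n : ℕ} {Λ : Type} [PartialOrder Λ] [Finite Λ]
    (p : Fin n → Λ) (hp : Function.Surjective p)
    (K : Submodule ℝ (Fin n → ℝ)) :
    (∀ g ∈ GLmf p, ∀ x ∈ K, g x ∈ K) ↔
      ∃ A : Finset Λ, IsAntichain (· ≤ ·) (A : Set Λ) ∧
        K = ⨅ α ∈ A, kerpr p α := by

  classical
  cases nonempty_fintype Λ
  constructor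
  · intro hinv
    -- Z: coordinates on which every element of K vanishes
    set Z : Set (Fin n) := {i | ∀ y ∈ K, y i = 0} with hZ
    -- transvections are in GLmf
    have htr : ∀ (i j : Fin n) (hij : i ≠ j), p i ≤ p j → transv i j hij ∈ GLmf p := by
      intro i j hij hpij k l hkl
      have h1 : l ≠ k := fun h => hkl (h ▸ le_rfl)
      rw [transv_apply]
      simp only [Pi.add_apply, Pi.smul_apply, smul_eq_mul, Pi.single_apply]
      rcases eq_or_ne l i with rfl | hli
      · have hjk : j ≠ k := by rintro rfl; exact hkl hpij
        simp [Ne.symm h1, Ne.symm hjk]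
      · simp [Ne.symm h1, Ne.symm hli]
    -- scalings are in GLmf
    have hsc : ∀ i : Fin n, scaleAt i ∈ GLmf p := by
      intro i k l hkl
      have h1 : l ≠ k := fun h => hkl (h ▸ le_rfl)
      rw [scaleAt_apply]
      simp [Pi.single_apply, h1]
    -- basis vectors at free coordinates lie in K
    have hbasis : ∀ i : Fin n, i ∉ Z → (Pi.single i 1 : Fin n → ℝ) ∈ K := by
      intro i hi
      simp only [hZ, Set.mem_setOf_eq, not_forall] at hi
      obtain ⟨y, hyK, hyi⟩ := hi
      have h1 : scaleAt i y ∈ K := hinv _ (hsc i) y hyK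
      have h2 : scaleAt i y - y ∈ K := K.sub_mem h1 hyK
      have h3 : scaleAt i y - y = y i • (Pi.single i 1 : Fin n → ℝ) := by
        funext k
        rcases eq_or_ne k i with rfl | hk
        · simp [scaleAt_apply]; ring
        · simp [scaleAt_apply, hk, Pi.single_apply]
      rw [h3] at h2
      have := K.smul_mem (y i)⁻¹ h2
      rwa [smul_smul, inv_mul_cancel₀ hyi, one_smul] at this
    -- Z is down-closed along p
    have hdown : ∀ i j : Fin n, p i ≤ p j → j ∈ Z → i ∈ Z := by
      intro i j hpij hj
      by_contra hi
      simp only [hZ, Set.mem_setOf_eq, not_forall] at hi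
      obtain ⟨y, hyK, hyi⟩ := hi
      rcases eq_or_ne i j with rfl | hij
      · exact hyi (hj y hyK)
      · have h1 : transv i j hij y ∈ K := hinv _ (htr i j hij hpij) y hyK
        have h2 := hj _ h1
        rw [transv_apply] at h2
        simp only [Pi.add_apply, Pi.smul_apply, Pi.single_eq_same, smul_eq_mul,
          mul_one] at h2
        rw [hj y hyK] at h2
        simp at h2
        exact hyi h2
    -- K is exactly the set of vectors vanishing on Z
    have hKeq : ∀ x : Fin n → ℝ, x ∈ K ↔ ∀ i ∈ Z, x i = 0 := by
      intro x
      constructor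
      · intro hx i hi; exact hi x hx
      · intro hx
        have hxsum : x = ∑ i, Pi.single i (x i) := by
          funext k; simp [Finset.sum_apply, Pi.single_apply]
        rw [hxsum]
        apply K.sum_mem
        intro i _
        by_cases hi : i ∈ Z
        · rw [hx i hi]; simp
        · have : Pi.single i (x i) = x i • (Pi.single i 1 : Fin n → ℝ) := by
            funext k; simp [Pi.single_apply]
          rw [this]
          exact K.smul_mem _ (hbasis i hi)
    -- D : image of Z under p, A : maximal elements of D
    set D : Finset Λ := Finset.univ.filter (fun α => ∃ i ∈ Z, p i = α) with hD
    set A : Finset Λ := D.filter (fun α => ∀ β ∈ D, ¬ α < β) with hA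
    have hAanti : IsAntichain (· ≤ ·) (A : Set Λ) := by
      intro α hα β hβ hne hle
      simp only [hA, Finset.coe_filter, Set.mem_setOf_eq] at hα hβ
      exact hα.2 β hβ.1 (lt_of_le_of_ne hle hne)
    have hDmax : ∀ α ∈ D, ∃ β ∈ A, α ≤ β := by
      intro α hα
      set S : Finset Λ := D.filter (fun β => α ≤ β) with hS
      have hαS : α ∈ S := by simp [hS, hα]
      obtain ⟨β, hβS, hβmax⟩ := S.exists_maximal ⟨α, hαS⟩
      simp only [hS, Finset.mem_filter] at hβS
      refine ⟨β, ?_, hβS.2⟩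
      simp only [hA, Finset.mem_filter]
      refine ⟨hβS.1, fun γ hγ hlt => ?_⟩
      exact absurd (hβmax (by simp [hS, hγ, hβS.2.trans hlt.le]) hlt.le) (not_le_of_gt hlt)
    refine ⟨A, hAanti, ?_⟩
    -- Z = {i : ∃ α ∈ A, p i ≤ α}
    have hZiff : ∀ i : Fin n, i ∈ Z ↔ ∃ α ∈ A, p i ≤ α := by
      intro i
      constructor
      · intro hi
        obtain ⟨β, hβ, hle⟩ := hDmax (p i) (by simp [hD]; exact ⟨i, hi, rfl⟩)
        exact ⟨β, hβ, hle⟩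
      · rintro ⟨α, hα, hle⟩
        have hαD : α ∈ D := (Finset.mem_filter.mp (hA ▸ hα)).1
        simp only [hD, Finset.mem_filter] at hαD
        obtain ⟨j, hjZ, rfl⟩ := hαD.2
        exact hdown i j hle hjZ
    apply le_antisymm
    · intro x hx
      simp only [Submodule.mem_iInf]
      intro α hα i hpi
      exact (hKeq x).mp hx i ((hZiff i).mpr ⟨α, hα, hpi⟩)
    · intro x hx
      simp only [Submodule.mem_iInf] at hx
      refine (hKeq x).mpr fun i hi => ?_
      obtain ⟨α, hα, hle⟩ := (hZiff i).mp hi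
      exact hx α hα i hle
  · rintro ⟨A, hAanti, rfl⟩
    intro g hg x hx
    simp only [Submodule.mem_iInf] at hx ⊢
    intro α hα i hpi
    rw [gl_apply g x i]
    apply Finset.sum_eq_zero
    intro j _
    by_cases hj : p j ≤ p i
    · rw [hx α hα j (hj.trans hpi), zero_mul]
    · rw [hg i j hj, mul_zero]
end

section
/- Let (Λ,p) be a multifoliate structure on {1,…,n}. The map sending an antichain A ⊆ Λ (a finite set of pairwise incomparable elements, possibly empty) to the subspace ∩_{α∈A} ker pr_α of ℝ^n is an order isomorphism from the set of antichains of Λ, ordered by A ≤ B iff every element of A is ≤ some element of B, onto the set of GL(Λ,p)-invariant subspaces of ℝ^n ordered by reverse inclusion. -/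
section Aux
variable {n : ℕ} {Λ : Type} [PartialOrder Λ]

noncomputable def dbl (i : Fin n) : (Fin n → ℝ) ≃ₗ[ℝ] (Fin n → ℝ) :=
  LinearEquiv.ofLinear
    (LinearMap.id + (LinearMap.proj i).smulRight (Pi.single i 1))
    (LinearMap.id - ((1:ℝ)/2) • (LinearMap.proj i).smulRight (Pi.single i 1))
    (by
      apply LinearMap.ext; intro x; funext k
      by_cases h : k = i <;>
        simp [LinearMap.smulRight_apply, Pi.single_apply, h, smul_eq_mul] <;> ring)
    (by
      apply LinearMap.ext; intro x; funext k
      by_cases h : k = i <;>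
        simp [LinearMap.smulRight_apply, Pi.single_apply, h, smul_eq_mul] <;> ring)

theorem dbl_apply (i : Fin n) (x : Fin n → ℝ) :
    dbl i x = x + x i • (Pi.single i 1 : Fin n → ℝ) := by
  simp [dbl, LinearEquiv.ofLinear_apply]

noncomputable def shear (i j : Fin n) (hij : i ≠ j) : (Fin n → ℝ) ≃ₗ[ℝ] (Fin n → ℝ) :=
  LinearEquiv.ofLinear
    (LinearMap.id + (LinearMap.proj i).smulRight (Pi.single j 1))
    (LinearMap.id - (LinearMap.proj i).smulRight (Pi.single j 1))
    (by
      apply LinearMap.ext; intro x; funext k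
      by_cases h : k = j <;>
        simp [LinearMap.smulRight_apply, Pi.single_apply, h, Ne.symm hij, smul_eq_mul] <;> ring)
    (by
      apply LinearMap.ext; intro x; funext k
      by_cases h : k = j <;>
        simp [LinearMap.smulRight_apply, Pi.single_apply, h, Ne.symm hij, smul_eq_mul] <;> ring)

theorem shear_apply (i j : Fin n) (hij : i ≠ j) (x : Fin n → ℝ) :
    shear i j hij x = x + x i • (Pi.single j 1 : Fin n → ℝ) := by
  simp [shear, LinearEquiv.ofLinear_apply]

theorem dbl_mem_GLmf (p : Fin n → Λ) (i : Fin n) : dbl i ∈ GLmf p := by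
  intro k m hkm
  rw [dbl_apply]
  have hkm' : k ≠ m := fun h => hkm (h ▸ le_refl _)
  rcases eq_or_ne i m with rfl | h2
  · simp [Pi.single_apply, hkm']
  · simp [Pi.single_apply, hkm', h2, Ne.symm h2]

theorem shear_mem_GLmf (p : Fin n → Λ) {i j : Fin n} (hij : i ≠ j) (hle : p i ≤ p j)
    : shear i j hij ∈ GLmf p := by
  intro k m hkm
  rw [shear_apply]
  have hkm' : k ≠ m := fun h => hkm (h ▸ le_refl _)
  rcases eq_or_ne m i with rfl | h2
  · rcases eq_or_ne k j with rfl | h3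
    · exact absurd hle hkm
    · simp [Pi.single_apply, hkm', h3]
  · simp [Pi.single_apply, hkm', h2, Ne.symm h2]

end Aux

section Aux2
variable {n : ℕ} {Λ : Type} [PartialOrder Λ]

theorem mem_kerpr (p : Fin n → Λ) {α : Λ} {x : Fin n → ℝ} :
    x ∈ kerpr p α ↔ ∀ i, p i ≤ α → x i = 0 := Iff.rfl

theorem single_eq_smul (j : Fin n) (x : Fin n → ℝ) :
    (Pi.single j (x j) : Fin n → ℝ) = x j • (Pi.single j 1 : Fin n → ℝ) := by
  funext k
  by_cases h : k = j <;> simp [Pi.single_apply, h]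

theorem apply_eq_sum (g : (Fin n → ℝ) ≃ₗ[ℝ] (Fin n → ℝ)) (x : Fin n → ℝ) (i : Fin n) :
    g x i = ∑ j, x j * g (Pi.single j 1) i := by
  conv_lhs => rw [← Finset.univ_sum_single x]
  simp only [single_eq_smul, map_sum, map_smul]
  simp [Finset.sum_apply, smul_eq_mul]

theorem mem_kerInf (p : Fin n → Λ) {A : Finset Λ} {x : Fin n → ℝ} :
    x ∈ (⨅ α ∈ A, kerpr p α) ↔ ∀ α ∈ A, ∀ i, p i ≤ α → x i = 0 := by
  simp only [Submodule.mem_iInf]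
  exact Iff.rfl

theorem kerInf_invariant (p : Fin n → Λ) (A : Finset Λ) :
    ∀ g ∈ GLmf p, ∀ x ∈ (⨅ α ∈ A, kerpr p α), g x ∈ (⨅ α ∈ A, kerpr p α) := by
  intro g hg x hx
  rw [mem_kerInf] at hx ⊢
  intro α hα i hi
  rw [apply_eq_sum]
  apply Finset.sum_eq_zero
  intro j _
  by_cases hj : p j ≤ p i
  · rw [hx α hα j (hj.trans hi), zero_mul]
  · rw [hg i j hj, mul_zero]

end Aux2

section Aux3
variable {n : ℕ} {Λ : Type} [PartialOrder Λ]

theorem single_mem_of_ne (p : Fin n → Λ) (K : Submodule ℝ (Fin n → ℝ))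
    (hK : ∀ g ∈ GLmf p, ∀ x ∈ K, g x ∈ K) {x : Fin n → ℝ} (hx : x ∈ K)
    {i : Fin n} (hxi : x i ≠ 0) : (Pi.single i 1 : Fin n → ℝ) ∈ K := by
  have h1 : dbl i x ∈ K := hK _ (dbl_mem_GLmf p i) x hx
  have h2 : dbl i x - x ∈ K := K.sub_mem h1 hx
  rw [dbl_apply, add_sub_cancel_left] at h2
  have h3 := K.smul_mem (x i)⁻¹ h2
  rwa [smul_smul, inv_mul_cancel₀ hxi, one_smul] at h3

theorem single_mem_mono (p : Fin n → Λ) (K : Submodule ℝ (Fin n → ℝ))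
    (hK : ∀ g ∈ GLmf p, ∀ x ∈ K, g x ∈ K) {i j : Fin n} (hij : p i ≤ p j)
    (hi : (Pi.single i 1 : Fin n → ℝ) ∈ K) : (Pi.single j 1 : Fin n → ℝ) ∈ K := by
  rcases eq_or_ne i j with rfl | h
  · exact hi
  have h1 := hK _ (shear_mem_GLmf p h hij) _ hi
  rw [shear_apply] at h1
  have h2 := K.sub_mem h1 hi
  rw [add_sub_cancel_left, Pi.single_eq_same, one_smul] at h2
  exact h2

theorem mem_invariant_iff (p : Fin n → Λ) (K : Submodule ℝ (Fin n → ℝ))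
    (hK : ∀ g ∈ GLmf p, ∀ x ∈ K, g x ∈ K) (x : Fin n → ℝ) :
    x ∈ K ↔ ∀ i, x i ≠ 0 → (Pi.single i 1 : Fin n → ℝ) ∈ K := by
  constructor
  · intro hx i hxi
    exact single_mem_of_ne p K hK hx hxi
  · intro h
    rw [← Finset.univ_sum_single x]
    apply Submodule.sum_mem
    intro j _
    by_cases hj : x j = 0
    · simp [hj]
    · rw [single_eq_smul]
      exact K.smul_mem _ (h j hj)

end Aux3


/-- `A ↦ ⋂_{α ∈ A} ker pr_α` is an order isomorphism from the
antichains of `Λ` (ordered by domination) onto the `GL(Λ,p)`-invariant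
subspaces of `ℝⁿ` (ordered by reverse inclusion). -/
theorem stmt_12 {n : ℕ} {Λ : Type} [PartialOrder Λ] [Finite Λ]
    (p : Fin n → Λ) (hp : Function.Surjective p) :
    ∃ e : AntichainsIn Λ ≃o InvariantSubspaces p,
      ∀ A : AntichainsIn Λ, (e A).1 = ⨅ α ∈ A.1, kerpr p α := by
  classical
  haveI : Fintype Λ := Fintype.ofFinite Λ
  let D : InvariantSubspaces p → Λ → Prop := fun K α =>
    ∀ i, p i = α → (Pi.single i 1 : Fin n → ℝ) ∉ K.1
  let Amax : InvariantSubspaces p → Finset Λ := fun K =>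
    Finset.univ.filter (fun α => D K α ∧ ∀ β, D K β → α ≤ β → α = β)
  have hanti : ∀ K, IsAntichain (· ≤ ·) ((Amax K : Finset Λ) : Set Λ) := by
    intro K a ha b hb hne hle
    rw [Finset.mem_coe, Finset.mem_filter] at ha hb
    exact hne (ha.2.2 b hb.2.1 hle)
  -- toK A : the intersection of the kernels
  let toK : AntichainsIn Λ → InvariantSubspaces p := fun A =>
    ⟨⨅ α ∈ A.1, kerpr p α, kerInf_invariant p A.1⟩
  -- characterize when a basis vector lies in toK A
  have hsingle : ∀ (A : AntichainsIn Λ) (i : Fin n),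
      (Pi.single i 1 : Fin n → ℝ) ∉ (toK A).1 ↔ ∃ β ∈ A.1, p i ≤ β := by
    intro A i
    rw [mem_kerInf]
    constructor
    · intro hne
      push_neg at hne
      obtain ⟨β, hβ, j, hj, hval⟩ := hne
      rcases eq_or_ne j i with rfl | hji
      · exact ⟨β, hβ, hj⟩
      · exact absurd (Pi.single_eq_of_ne hji 1) hval
    · rintro ⟨β, hβ, hle⟩ hmem
      have := hmem β hβ i hle
      rw [Pi.single_eq_same] at this
      exact one_ne_zero this
  -- key fact: for invariant K, missing basis vectors are detected by Amax K
  have key1 : ∀ (K : InvariantSubspaces p) (i : Fin n),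
      (Pi.single i 1 : Fin n → ℝ) ∉ K.1 ↔ ∃ α ∈ Amax K, p i ≤ α := by
    intro K i
    constructor
    · intro hi
      have hDpi : D K (p i) := fun j hj hjK =>
        hi (single_mem_mono p K.1 K.2 (le_of_eq hj) hjK)
      obtain ⟨a, ha, hamax⟩ := Set.Finite.exists_maximalFor
        id _ (Set.toFinite {β | D K β ∧ p i ≤ β}) ⟨p i, hDpi, le_refl _⟩
      refine ⟨a, ?_, ha.2⟩
      rw [Finset.mem_filter]
      exact ⟨Finset.mem_univ a, ha.1,
        fun β hβ hab => le_antisymm hab (hamax ⟨hβ, ha.2.trans hab⟩ hab)⟩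
    · rintro ⟨α, hα, hle⟩ hiK
      rw [Finset.mem_filter] at hα
      obtain ⟨j, hj⟩ := hp α
      exact hα.2.1 j hj
        (single_mem_mono p K.1 K.2 (hle.trans_eq hj.symm) hiK)
  -- D for a toK A is the downward closure of A
  have hD : ∀ (A : AntichainsIn Λ) (α : Λ), D (toK A) α ↔ ∃ β ∈ A.1, α ≤ β := by
    intro A α
    constructor
    · intro hα
      obtain ⟨i, hi⟩ := hp α
      obtain ⟨β, hβ, hle⟩ := (hsingle A i).mp (hα i hi)
      exact ⟨β, hβ, hi ▸ hle⟩
    · rintro ⟨β, hβ, hle⟩ i hi hmem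
      exact (hsingle A i).mpr ⟨β, hβ, hi.le.trans hle⟩ hmem
  have hleft : ∀ A : AntichainsIn Λ, (⟨Amax (toK A), hanti (toK A)⟩ : AntichainsIn Λ) = A := by
    intro A
    apply Subtype.ext
    ext α
    rw [Finset.mem_filter]
    constructor
    · rintro ⟨-, hDα, hmax⟩
      obtain ⟨β, hβ, hle⟩ := (hD A α).mp hDα
      have hDβ : D (toK A) β := (hD A β).mpr ⟨β, hβ, le_refl β⟩
      rw [hmax β hDβ hle]
      exact hβ
    · intro hα
      refine ⟨Finset.mem_univ α, (hD A α).mpr ⟨α, hα, le_refl α⟩, ?_⟩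
      intro β hβ hab
      obtain ⟨γ, hγ, hbc⟩ := (hD A β).mp hβ
      have hac : α ≤ γ := hab.trans hbc
      have hαγ : α = γ := by
        by_contra hne
        exact A.2 hα hγ hne hac
      exact le_antisymm hab (hbc.trans_eq hαγ.symm)
  have hright : ∀ K : InvariantSubspaces p,
      toK ⟨Amax K, hanti K⟩ = K := by
    intro K
    apply Subtype.ext
    ext x
    rw [show (toK ⟨Amax K, hanti K⟩).1 = ⨅ α ∈ Amax K, kerpr p α from rfl,
      mem_kerInf, mem_invariant_iff p K.1 K.2 x]
    constructor
    · intro h i hxi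
      by_contra hiK
      obtain ⟨α, hα, hle⟩ := (key1 K i).mp hiK
      exact hxi (h α hα i hle)
    · intro h α hα i hle
      by_contra hxi
      exact (key1 K i).mpr ⟨α, hα, hle⟩ (h i hxi)
  refine ⟨⟨⟨toK, fun K => ⟨Amax K, hanti K⟩, hleft, hright⟩, ?_⟩, fun A => rfl⟩
  intro A B
  show (toK B).1 ≤ (toK A).1 ↔ ∀ a ∈ A.1, ∃ b ∈ B.1, a ≤ b
  constructor
  · intro h a ha
    by_contra hc
    push_neg at hc
    obtain ⟨i, hi⟩ := hp a
    have hmem : (Pi.single i 1 : Fin n → ℝ) ∈ (toK B).1 := by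
      by_contra hne
      obtain ⟨β, hβ, hle⟩ := (hsingle B i).mp hne
      exact hc β hβ (hi ▸ hle)
    have := (mem_kerInf p).mp (h hmem) a ha i hi.le
    rw [Pi.single_eq_same] at this
    exact one_ne_zero this
  · intro h x hx
    rw [mem_kerInf] at hx ⊢
    intro α hα i hle
    obtain ⟨b, hb, hab⟩ := h α hα
    exact hx b hb i (hle.trans hab)
end

section
/- Let (Λ,p) be a multifoliate structure on {1,…,n}. Then the map α ↦ ker pr_α is injective and order-reversing with order-reversing inverse on its image: for all α, β ∈ Λ, α ≤ β if and only if ker pr_β ⊆ ker pr_α. Consequently Λ is canonically order-isomorphic to the subposet of singleton antichains inside the poset of all GL(Λ,p)-invariant subspaces of ℝ^n ordered by reverse inclusion. -/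
lemma kerpr_le_iff {n : ℕ} {Λ : Type} [PartialOrder Λ]
    (p : Fin n → Λ) (hp : Function.Surjective p) (α β : Λ) :
    α ≤ β ↔ kerpr p β ≤ kerpr p α := by
  constructor
  · intro h x hx i hi
    exact hx i (hi.trans h)
  · intro h
    by_contra hab
    obtain ⟨i, rfl⟩ := hp α
    have hx : Pi.single i (1:ℝ) ∈ kerpr p β := by
      intro j hj
      by_cases hji : j = i
      · subst hji; exact absurd hj hab
      · simp [Pi.single_apply, Ne.symm hji]
    have := h hx i le_rfl
    simp at this

lemma kerpr_invariant {n : ℕ} {Λ : Type} [PartialOrder Λ]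
    (p : Fin n → Λ) (α : Λ) :
    ∀ g ∈ GLmf p, ∀ x ∈ kerpr p α, g x ∈ kerpr p α := by
  intro g hg x hx i hi
  have hxe : x = ∑ j : Fin n, (x j) • (Pi.single j (1:ℝ) : Fin n → ℝ) := by
    ext k
    rw [Finset.sum_apply]
    simp [Pi.single_apply]
  calc g x i = (∑ j : Fin n, (x j) • g (Pi.single j (1:ℝ))) i := by
        conv_lhs => rw [hxe]
        rw [map_sum]
        simp only [map_smul]
    _ = ∑ j : Fin n, (x j) * g (Pi.single j (1:ℝ)) i := by
        rw [Finset.sum_apply]; simp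
    _ = 0 := by
        apply Finset.sum_eq_zero
        intro j _
        by_cases hj : p j ≤ α
        · rw [hx j hj, zero_mul]
        · have : ¬ p j ≤ p i := fun h => hj (h.trans hi)
          rw [hg i j this, mul_zero]

/-- `α ↦ ker pr_α` is injective, and `α ≤ β` iff
`ker pr_β ⊆ ker pr_α`; consequently `Λ` is order-isomorphic to the subposet
of the invariant subspaces (in reverse inclusion order) consisting of the
`ker pr_α`. -/
theorem stmt_13 {n : ℕ} {Λ : Type} [PartialOrder Λ] [Finite Λ]
    (p : Fin n → Λ) (hp : Function.Surjective p) :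
    Function.Injective (kerpr p) ∧
    (∀ α β : Λ, α ≤ β ↔ kerpr p β ≤ kerpr p α) ∧
    ∃ e : Λ ≃o {K : InvariantSubspaces p // ∃ α : Λ, K.1 = kerpr p α},
      ∀ α : Λ, ((e α).1).1 = kerpr p α := by
  have hinj : Function.Injective (kerpr p) := by
    intro α β h
    exact le_antisymm
      ((kerpr_le_iff p hp α β).2 (h ▸ le_rfl))
      ((kerpr_le_iff p hp β α).2 (h ▸ le_rfl))
  refine ⟨hinj, kerpr_le_iff p hp, ?_⟩
  let f : Λ → {K : InvariantSubspaces p // ∃ α : Λ, K.1 = kerpr p α} :=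
    fun α => ⟨⟨kerpr p α, kerpr_invariant p α⟩, α, rfl⟩
  have hbij : Function.Bijective f := by
    constructor
    · intro α β h
      exact hinj (congrArg (fun K => K.1.1) h)
    · rintro ⟨⟨K, hK⟩, α, hα⟩
      exact ⟨α, by simp only [f]; congr 1; exact Subtype.ext hα.symm⟩
  refine ⟨{ toEquiv := Equiv.ofBijective f hbij, map_rel_iff' := ?_ }, fun α => rfl⟩
  intro α β
  exact (kerpr_le_iff p hp α β).symm
end

section
/- If (Λ,p) and (Ω,q) are equivalent multifoliate structures on {1,…,n}, then there exist an order isomorphism ω : Λ → Ω and a permutation σ of {1,…,n} such that q = ω ∘ p ∘ σ; in particular, for every α ∈ Λ the fibers p⁻¹(α) and q⁻¹(ω(α)) have the same cardinality. -/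
set_option linter.unusedSectionVars false
set_option linter.unreachableTactic false
set_option linter.unusedTactic false
set_option linter.unnecessarySeqFocus false

section Stmt15Aux

open Set

variable {n : ℕ} {Λ : Type} [PartialOrder Λ]

/-- Coordinate subspace attached to a set `U` of values of `p`. -/
def KUx (p : Fin n → Λ) (U : Set Λ) : Submodule ℝ (Fin n → ℝ) where
  carrier := {x | ∀ j, p j ∉ U → x j = 0}
  add_mem' := by intro a b ha hb j hj; simp [ha j hj, hb j hj]
  zero_mem' := by intro j _; rfl
  smul_mem' := by intro c a ha j hj; simp [ha j hj]

lemma mem_KUx {p : Fin n → Λ} {U : Set Λ} {x : Fin n → ℝ} :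
    x ∈ KUx p U ↔ ∀ j, p j ∉ U → x j = 0 := Iff.rfl

def IsInvt (p : Fin n → Λ) (K : Submodule ℝ (Fin n → ℝ)) : Prop :=
  ∀ g ∈ GLmf p, ∀ x ∈ K, g x ∈ K

/-- Shear linear map `x ↦ x + x j • (c e_i)`. -/
noncomputable def shearL (i j : Fin n) (c : ℝ) : (Fin n → ℝ) →ₗ[ℝ] (Fin n → ℝ) :=
  LinearMap.id + (LinearMap.proj j : (Fin n → ℝ) →ₗ[ℝ] ℝ).smulRight (Pi.single i c)

lemma shearL_apply (i j : Fin n) (c : ℝ) (x : Fin n → ℝ) (k : Fin n) :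
    shearL i j c x k = x k + x j * (if k = i then c else 0) := by
  simp [shearL, Pi.single_apply]

/-- Transvection as a linear equivalence (`i ≠ j`). -/
noncomputable def tvE (i j : Fin n) (hij : i ≠ j) : (Fin n → ℝ) ≃ₗ[ℝ] (Fin n → ℝ) :=
  LinearEquiv.ofLinear (shearL i j 1) (shearL i j (-1))
    (by
      ext x k
      simp only [LinearMap.comp_apply, LinearMap.id_apply, LinearMap.id_coe, id_eq]
      rw [shearL_apply, shearL_apply, shearL_apply]
      rw [if_neg (Ne.symm hij)]
      by_cases hk : k = i <;> simp [hk] <;> ring)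
    (by
      ext x k
      simp only [LinearMap.comp_apply, LinearMap.id_apply, LinearMap.id_coe, id_eq]
      rw [shearL_apply, shearL_apply, shearL_apply]
      rw [if_neg (Ne.symm hij)]
      by_cases hk : k = i <;> simp [hk] <;> ring)

/-- Doubling of the `j`-th coordinate as a linear equivalence. -/
noncomputable def dvE (j : Fin n) : (Fin n → ℝ) ≃ₗ[ℝ] (Fin n → ℝ) :=
  LinearEquiv.ofLinear (shearL j j 1) (shearL j j (-(1/2)))
    (by
      ext x k
      simp only [LinearMap.comp_apply, LinearMap.id_apply, LinearMap.id_coe, id_eq]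
      rw [shearL_apply, shearL_apply, shearL_apply]
      by_cases hk : k = j <;> simp [hk] <;> ring)
    (by
      ext x k
      simp only [LinearMap.comp_apply, LinearMap.id_apply, LinearMap.id_coe, id_eq]
      rw [shearL_apply, shearL_apply, shearL_apply]
      by_cases hk : k = j <;> simp [hk] <;> ring)

lemma tvE_mem (p : Fin n → Λ) {i j : Fin n} (hij : i ≠ j) (hle : p j ≤ p i) :
    tvE i j hij ∈ GLmf p := by
  intro k l hkl
  have : tvE i j hij (Pi.single l 1) k = shearL i j 1 (Pi.single l 1) k := rfl
  rw [this, shearL_apply, Pi.single_apply, Pi.single_apply]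
  have h1 : k ≠ l := fun h => hkl (h ▸ le_refl (p l))
  rw [if_neg h1]
  by_cases h2 : j = l
  · by_cases h3 : k = i
    · exact absurd (by rw [← h2, h3]; exact hle) hkl
    · simp [h3]
  · simp [h2]

lemma dvE_mem (p : Fin n → Λ) (j : Fin n) : dvE j ∈ GLmf p := by
  intro k l hkl
  have : dvE j (Pi.single l 1) k = shearL j j 1 (Pi.single l 1) k := rfl
  rw [this, shearL_apply, Pi.single_apply, Pi.single_apply]
  have h1 : k ≠ l := fun h => hkl (h ▸ le_refl (p l))
  rw [if_neg h1]
  by_cases h2 : j = l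
  · by_cases h3 : k = j
    · exact absurd (h3.trans h2) h1
    · simp [h3]
  · simp [h2]

end Stmt15Aux

section Stmt15Aux2

open Set

variable {n : ℕ} {Λ : Type} [PartialOrder Λ]

lemma single_coord_mem {p : Fin n → Λ} {K : Submodule ℝ (Fin n → ℝ)}
    (hK : IsInvt p K) {x : Fin n → ℝ} (hx : x ∈ K) (j : Fin n) :
    Pi.single j (x j) ∈ K := by
  have h1 := hK (dvE j) (dvE_mem p j) x hx
  have h2 : dvE j x - x ∈ K := sub_mem h1 hx
  have h3 : Pi.single j (x j) = dvE j x - x := by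
    funext k
    have hh : dvE j x k = shearL j j 1 x k := rfl
    rw [Pi.sub_apply, hh, shearL_apply, Pi.single_apply]
    by_cases hk : k = j <;> simp [hk]
  rw [h3]; exact h2

lemma single_one_mem {p : Fin n → Λ} {K : Submodule ℝ (Fin n → ℝ)}
    (hK : IsInvt p K) {i j : Fin n} (hle : p j ≤ p i)
    (hj : Pi.single j (1:ℝ) ∈ K) : Pi.single i (1:ℝ) ∈ K := by
  by_cases hij : i = j
  · subst hij; exact hj
  · have h1 := hK (tvE i j hij) (tvE_mem p hij hle) _ hj
    have h2 : tvE i j hij (Pi.single j 1) - Pi.single j 1 ∈ K := sub_mem h1 hj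
    have h3 : Pi.single i (1:ℝ) = tvE i j hij (Pi.single j 1) - Pi.single j 1 := by
      funext k
      have hh : tvE i j hij (Pi.single j 1) k = shearL i j 1 (Pi.single j 1) k := rfl
      rw [Pi.sub_apply, hh, shearL_apply, Pi.single_apply, Pi.single_apply, Pi.single_apply]
      simp
    rw [h3]; exact h2

lemma eq_sum_single (x : Fin n → ℝ) : x = ∑ k, Pi.single k (x k) := by
  funext l
  rw [Finset.sum_apply]
  simp [Pi.single_apply]

lemma eq_sum_smul_single (x : Fin n → ℝ) : x = ∑ k, x k • (Pi.single k 1 : Fin n → ℝ) := by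
  funext l
  rw [Finset.sum_apply]
  simp [Pi.single_apply, mul_ite]

lemma isInvt_eq_KUx {p : Fin n → Λ} (hp : Function.Surjective p)
    {K : Submodule ℝ (Fin n → ℝ)} (hK : IsInvt p K) :
    ∃ U : Set Λ, IsUpperSet U ∧ K = KUx p U := by
  classical
  set J : Set (Fin n) := {j | Pi.single j (1:ℝ) ∈ K} with hJ
  set U : Set Λ := p '' J with hU
  have hJU : ∀ j, p j ∈ U → Pi.single j (1:ℝ) ∈ K := by
    rintro j ⟨j', hj', hpj⟩
    exact single_one_mem hK (le_of_eq hpj) hj'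
  have hupper : IsUpperSet U := by
    rintro α β hab ⟨j', hj', rfl⟩
    obtain ⟨i, rfl⟩ := hp β
    exact ⟨i, single_one_mem hK hab hj', rfl⟩
  refine ⟨U, hupper, le_antisymm ?_ ?_⟩
  · intro x hx j hj
    by_contra hxj
    have h1 : Pi.single j (x j) ∈ K := single_coord_mem hK hx j
    have h2 : Pi.single j (1:ℝ) ∈ K := by
      have h3 := K.smul_mem (x j)⁻¹ h1
      have h4 : (x j)⁻¹ • (Pi.single j (x j) : Fin n → ℝ) = Pi.single j 1 := by
        funext k
        rw [Pi.smul_apply, Pi.single_apply, Pi.single_apply]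
        by_cases hk : k = j <;> simp [hk, inv_mul_cancel₀ hxj]
      rwa [h4] at h3
    exact hj ⟨j, h2, rfl⟩
  · intro x hx
    have hxs : x = ∑ k, Pi.single k (x k) := eq_sum_single x
    rw [hxs]
    refine Submodule.sum_mem _ fun k _ => ?_
    by_cases hk : p k ∈ U
    · have h5 : Pi.single k (x k) = (x k) • (Pi.single k 1 : Fin n → ℝ) := by
        funext l
        rw [Pi.smul_apply, Pi.single_apply, Pi.single_apply]
        by_cases hl : l = k <;> simp [hl]
      rw [h5]; exact K.smul_mem _ (hJU k hk)
    · have h6 : x k = 0 := hx k hk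
      rw [h6]
      simp

lemma isInvt_KUx {p : Fin n → Λ} {U : Set Λ} (hU : IsUpperSet U) :
    IsInvt p (KUx p U) := by
  intro g hg x hx j hj
  have hgx : g x j = ∑ k, x k * g (Pi.single k (1:ℝ)) j := by
    conv_lhs => rw [eq_sum_smul_single x]
    rw [map_sum, Finset.sum_apply]
    simp
  rw [hgx]
  refine Finset.sum_eq_zero fun k _ => ?_
  by_cases hk : p k ∈ U
  · rw [hg j k fun hle => hj (hU hle hk), mul_zero]
  · rw [show x k = 0 from hx k hk, zero_mul]

lemma KUx_le_iff {p : Fin n → Λ} (hp : Function.Surjective p) {U V : Set Λ} :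
    KUx p U ≤ KUx p V ↔ U ⊆ V := by
  constructor
  · intro h α hα
    obtain ⟨j, rfl⟩ := hp α
    have hmem : Pi.single j (1:ℝ) ∈ KUx p U := by
      intro k hk
      rw [Pi.single_apply, if_neg]
      rintro rfl
      exact hk hα
    by_contra hV
    have h0 := h hmem j hV
    simp at h0
  · intro hUV x hx j hj
    exact hx j fun hU0 => hj (hUV hU0)

lemma KUx_inj {p : Fin n → Λ} (hp : Function.Surjective p) {U V : Set Λ}
    (h : KUx p U = KUx p V) : U = V :=
  subset_antisymm ((KUx_le_iff hp).mp h.le) ((KUx_le_iff hp).mp h.ge)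

noncomputable def KUxEquiv (p : Fin n → Λ) (U : Set Λ) :
    KUx p U ≃ₗ[ℝ] ({j : Fin n // p j ∈ U} → ℝ) := by
  classical
  exact LinearEquiv.ofLinear
    (LinearMap.pi fun j => (LinearMap.proj j.1).comp (KUx p U).subtype)
    (LinearMap.codRestrict (KUx p U)
      (LinearMap.pi fun j =>
        if h : p j ∈ U then LinearMap.proj (⟨j, h⟩ : {j : Fin n // p j ∈ U}) else 0)
      (fun y => mem_KUx.2 fun j hj => by simp [LinearMap.pi_apply, dif_neg hj]))
    (by
      ext y j
      simp only [LinearMap.comp_apply, LinearMap.codRestrict_apply, LinearMap.pi_apply,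
        LinearMap.id_coe, id_eq, Submodule.subtype_apply, LinearMap.proj_apply]
      rw [dif_pos j.2]
      rfl)
    (by
      refine LinearMap.ext fun x => Subtype.ext (funext fun j => ?_)
      by_cases hj : p j ∈ U
      · simp only [LinearMap.comp_apply, LinearMap.codRestrict_apply, LinearMap.pi_apply,
          dif_pos hj, LinearMap.id_coe, id_eq]
        rfl
      · simp only [LinearMap.comp_apply, LinearMap.codRestrict_apply, LinearMap.pi_apply,
          dif_neg hj, LinearMap.zero_apply, LinearMap.id_coe, id_eq]
        exact (x.2 j hj).symm)

lemma card_index_eq {Ω : Type} [PartialOrder Ω] {p : Fin n → Λ} {q : Fin n → Ω}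
    {U : Set Λ} {V : Set Ω} (e : KUx p U ≃ₗ[ℝ] KUx q V) :
    Nat.card {j : Fin n // p j ∈ U} = Nat.card {i : Fin n // q i ∈ V} := by
  classical
  have e2 := ((KUxEquiv p U).symm.trans e).trans (KUxEquiv q V)
  have hfr := e2.finrank_eq
  rw [Module.finrank_fintype_fun_eq_card, Module.finrank_fintype_fun_eq_card] at hfr
  simpa [Nat.card_eq_fintype_card] using hfr

lemma map_symm_map_eq {M N : Type} [AddCommGroup M] [AddCommGroup N]
    [Module ℝ M] [Module ℝ N] (φ : M ≃ₗ[ℝ] N) (K : Submodule ℝ M) :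
    Submodule.map (φ.symm : N →ₗ[ℝ] M) (Submodule.map (φ : M →ₗ[ℝ] N) K) = K := by
  ext x
  simp only [Submodule.mem_map, LinearEquiv.coe_coe]
  constructor
  · rintro ⟨y, ⟨z, hz, rfl⟩, rfl⟩
    simpa using hz
  · intro hx
    exact ⟨φ x, ⟨x, hx, rfl⟩, by simp⟩

lemma invt_map {Ω : Type} [PartialOrder Ω] {p : Fin n → Λ} {q : Fin n → Ω}
    (φ : (Fin n → ℝ) ≃ₗ[ℝ] (Fin n → ℝ))
    (hφ : Set.SurjOn (fun f => (φ.symm.trans f).trans φ) (GLmf p) (GLmf q))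
    {K : Submodule ℝ (Fin n → ℝ)} (hK : IsInvt p K) :
    IsInvt q (Submodule.map (φ : (Fin n → ℝ) →ₗ[ℝ] (Fin n → ℝ)) K) := by
  rintro g hg y ⟨x, hx, rfl⟩
  obtain ⟨f, hf, hfg⟩ := hφ hg
  refine ⟨f x, hK f hf x hx, ?_⟩
  have h1 := congrArg (fun e : (Fin n → ℝ) ≃ₗ[ℝ] (Fin n → ℝ) => e (φ x)) hfg
  simpa using h1

end Stmt15Aux2

section Stmt15Birkhoff

open Set

variable {Λ' Ω' : Type} [PartialOrder Λ'] [PartialOrder Ω'] [Finite Λ'] [Finite Ω']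

/-- A pair of mutually inverse, monotone, upper-set preserving maps. -/
structure UGoodPair (Φ : Set Λ' → Set Ω') (Ψ : Set Ω' → Set Λ') : Prop where
  up1 : ∀ U, IsUpperSet U → IsUpperSet (Φ U)
  up2 : ∀ V, IsUpperSet V → IsUpperSet (Ψ V)
  inv1 : ∀ U, IsUpperSet U → Ψ (Φ U) = U
  inv2 : ∀ V, IsUpperSet V → Φ (Ψ V) = V
  mono1 : ∀ U U', IsUpperSet U → IsUpperSet U' → U ⊆ U' → Φ U ⊆ Φ U'
  mono2 : ∀ V V', IsUpperSet V → IsUpperSet V' → V ⊆ V' → Ψ V ⊆ Ψ V'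

namespace UGoodPair

variable {Φ : Set Λ' → Set Ω'} {Ψ : Set Ω' → Set Λ'}

lemma symm (h : UGoodPair Φ Ψ) : UGoodPair Ψ Φ :=
  ⟨h.up2, h.up1, h.inv2, h.inv1, h.mono2, h.mono1⟩

lemma subset_iff (h : UGoodPair Φ Ψ) {U U' : Set Λ'}
    (hU : IsUpperSet U) (hU' : IsUpperSet U') : Φ U ⊆ Φ U' ↔ U ⊆ U' := by
  constructor
  · intro hh
    have h2 := h.mono2 _ _ (h.up1 U hU) (h.up1 U' hU') hh
    rwa [h.inv1 U hU, h.inv1 U' hU'] at h2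
  · exact h.mono1 U U' hU hU'

lemma principal (h : UGoodPair Φ Ψ) (α : Λ') : ∃ β : Ω', Φ (Ici α) = Ici β := by
  classical
  have hVup : IsUpperSet (Φ (Ici α)) := h.up1 _ (isUpperSet_Ici α)
  have hne : (Φ (Ici α)).Nonempty := by
    rw [nonempty_iff_ne_empty]
    intro hemp
    have h0 : Φ (Ici α) ⊆ Φ ∅ := by rw [hemp]; exact empty_subset _
    have h1 : Ici α ⊆ (∅ : Set Λ') :=
      (h.subset_iff (isUpperSet_Ici α) isUpperSet_empty).mp h0
    exact h1 self_mem_Ici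
  have hfin : (Φ (Ici α)).Finite := Set.toFinite _
  obtain ⟨β, hβm⟩ := Finset.exists_minimal (s := hfin.toFinset)
    (by rwa [Set.Finite.toFinset_nonempty])
  have hβ0 : β ∈ hfin.toFinset := hβm.1
  have hmin0 : ∀ x ∈ hfin.toFinset, ¬ x < β := fun x hx hlt => hlt.not_ge (hβm.2 hx hlt.le)
  rw [Set.Finite.mem_toFinset] at hβ0
  have hmin : ∀ x ∈ Φ (Ici α), ¬ x < β := fun x hx => hmin0 x (hfin.mem_toFinset.mpr hx)
  refine ⟨β, subset_antisymm ?_ (fun γ hγ => hVup hγ hβ0)⟩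
  intro γ hγ
  by_contra hβγ
  have hW1up : IsUpperSet (Φ (Ici α) \ {β}) := by
    rintro x y hxy ⟨hxV, hxβ⟩
    refine ⟨hVup hxy hxV, ?_⟩
    intro hy
    rw [mem_singleton_iff] at hy
    subst hy
    exact hmin x hxV (lt_of_le_of_ne hxy (by simpa using hxβ))
  have hIci : Ici β ⊆ Φ (Ici α) := fun δ hδ => hVup hδ hβ0
  have hcover : (Φ (Ici α) \ {β}) ∪ Ici β = Φ (Ici α) := by
    apply subset_antisymm
    · exact union_subset diff_subset hIci
    · intro δ hδ
      by_cases hδβ : δ = β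
      · exact Or.inr (hδβ ▸ self_mem_Ici)
      · exact Or.inl ⟨hδ, by simpa using hδβ⟩
  have hunion : Ψ ((Φ (Ici α) \ {β}) ∪ Ici β) = Ψ (Φ (Ici α) \ {β}) ∪ Ψ (Ici β) := by
    apply subset_antisymm
    · have hup12 : IsUpperSet (Ψ (Φ (Ici α) \ {β}) ∪ Ψ (Ici β)) :=
        (h.up2 _ hW1up).union (h.up2 _ (isUpperSet_Ici β))
      have hs1 : Φ (Ici α) \ {β} ⊆ Φ (Ψ (Φ (Ici α) \ {β}) ∪ Ψ (Ici β)) := by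
        have := h.mono2 _ _ hW1up ((hW1up).union (isUpperSet_Ici β)) subset_union_left
        have h2 := h.mono1 _ _ (h.up2 _ hW1up) hup12
          (subset_union_left : Ψ (Φ (Ici α) \ {β}) ⊆ _)
        rw [h.inv2 _ hW1up] at h2
        exact h2
      have hs2 : Ici β ⊆ Φ (Ψ (Φ (Ici α) \ {β}) ∪ Ψ (Ici β)) := by
        have h2 := h.mono1 _ _ (h.up2 _ (isUpperSet_Ici β)) hup12
          (subset_union_right : Ψ (Ici β) ⊆ _)
        rw [h.inv2 _ (isUpperSet_Ici β)] at h2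
        exact h2
      have h3 : (Φ (Ici α) \ {β}) ∪ Ici β ⊆ Φ (Ψ (Φ (Ici α) \ {β}) ∪ Ψ (Ici β)) :=
        union_subset hs1 hs2
      have h4 := h.mono2 _ _ (hW1up.union (isUpperSet_Ici β))
        (h.up1 _ hup12) h3
      rwa [h.inv1 _ hup12] at h4
    · apply union_subset
      · exact h.mono2 _ _ hW1up (hW1up.union (isUpperSet_Ici β)) subset_union_left
      · exact h.mono2 _ _ (isUpperSet_Ici β) (hW1up.union (isUpperSet_Ici β)) subset_union_right
  have hsplit : Ici α = Ψ (Φ (Ici α) \ {β}) ∪ Ψ (Ici β) := by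
    rw [← hunion, hcover, h.inv1 _ (isUpperSet_Ici α)]
  have hα : α ∈ Ψ (Φ (Ici α) \ {β}) ∪ Ψ (Ici β) := hsplit ▸ self_mem_Ici
  rcases hα with hα1 | hα2
  · have hsub : Ici α ⊆ Ψ (Φ (Ici α) \ {β}) := fun δ hδ => (h.up2 _ hW1up) hδ hα1
    have h2 := h.mono1 _ _ (isUpperSet_Ici α) (h.up2 _ hW1up) hsub
    rw [h.inv2 _ hW1up] at h2
    exact (h2 hβ0).2 rfl
  · have hsub : Ici α ⊆ Ψ (Ici β) := fun δ hδ => (h.up2 _ (isUpperSet_Ici β)) hδ hα2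
    have h2 := h.mono1 _ _ (isUpperSet_Ici α) (h.up2 _ (isUpperSet_Ici β)) hsub
    rw [h.inv2 _ (isUpperSet_Ici β)] at h2
    exact hβγ (h2 hγ)

lemma punctured (h : UGoodPair Φ Ψ) {α : Λ'} {β : Ω'} (hprin : Φ (Ici α) = Ici β) :
    Φ (Ici α \ {α}) = Ici β \ {β} := by
  have hup : IsUpperSet (Ici α \ {α}) := by
    rintro x y hxy ⟨hx, hx'⟩
    refine ⟨le_trans hx hxy, ?_⟩
    intro hy
    rw [mem_singleton_iff] at hy
    subst hy
    exact hx' (by simpa using le_antisymm hxy hx)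
  have hupβ : IsUpperSet (Ici β \ {β}) := by
    rintro x y hxy ⟨hx, hx'⟩
    refine ⟨le_trans hx hxy, ?_⟩
    intro hy
    rw [mem_singleton_iff] at hy
    subst hy
    exact hx' (by simpa using le_antisymm hxy hx)
  have h1 : Φ (Ici α \ {α}) ⊆ Ici β := by
    rw [← hprin]
    exact h.mono1 _ _ hup (isUpperSet_Ici α) diff_subset
  have h2 : β ∉ Φ (Ici α \ {α}) := by
    intro hβ
    have h3 : Ici β ⊆ Φ (Ici α \ {α}) := fun δ hδ => (h.up1 _ hup) hδ hβ
    have h5 : Φ (Ici α) ⊆ Φ (Ici α \ {α}) := by rw [hprin]; exact h3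
    have h6 := (h.subset_iff (isUpperSet_Ici α) hup).mp h5
    exact (h6 self_mem_Ici).2 rfl
  have hsub1 : Φ (Ici α \ {α}) ⊆ Ici β \ {β} :=
    fun δ hδ => ⟨h1 hδ, fun hh => h2 ((mem_singleton_iff.mp hh) ▸ hδ)⟩
  have h1' : Ψ (Ici β \ {β}) ⊆ Ici α := by
    have h7 := h.mono2 _ _ hupβ (isUpperSet_Ici β) diff_subset
    have h8 : Ψ (Ici β) = Ici α := by rw [← hprin, h.inv1 _ (isUpperSet_Ici α)]
    rwa [h8] at h7
  have h2' : α ∉ Ψ (Ici β \ {β}) := by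
    intro hα
    have h3 : Ici α ⊆ Ψ (Ici β \ {β}) := fun δ hδ => (h.up2 _ hupβ) hδ hα
    have h5 := h.mono1 _ _ (isUpperSet_Ici α) (h.up2 _ hupβ) h3
    rw [h.inv2 _ hupβ] at h5
    rw [hprin] at h5
    exact (h5 self_mem_Ici).2 rfl
  have h3 : Ψ (Ici β \ {β}) ⊆ Ici α \ {α} :=
    fun δ hδ => ⟨h1' hδ, fun hh => h2' ((mem_singleton_iff.mp hh) ▸ hδ)⟩
  have h4 := h.mono1 _ _ (h.up2 _ hupβ) hup h3
  rw [h.inv2 _ hupβ] at h4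
  exact subset_antisymm hsub1 h4

end UGoodPair

lemma fiber_count {n : ℕ} {Λ' : Type} [PartialOrder Λ'] (p : Fin n → Λ') (α : Λ') :
    Nat.card {j : Fin n // p j ∈ Set.Ici α} =
      Nat.card {j : Fin n // p j = α} + Nat.card {j : Fin n // p j ∈ Set.Ici α \ {α}} := by
  classical
  rw [Nat.card_eq_fintype_card, Nat.card_eq_fintype_card, Nat.card_eq_fintype_card,
    Fintype.card_subtype, Fintype.card_subtype, Fintype.card_subtype]
  have hd : Disjoint (Finset.univ.filter fun j => p j = α)
      (Finset.univ.filter fun j => p j ∈ Set.Ici α \ {α}) := by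
    rw [Finset.disjoint_left]
    intro j hj1 hj2
    simp only [Finset.mem_filter] at hj1 hj2
    exact hj2.2.2 hj1.2
  rw [← Finset.card_union_of_disjoint hd]
  congr 1
  ext j
  simp only [Finset.mem_filter, Finset.mem_union, Finset.mem_univ, true_and,
    Set.mem_Ici, Set.mem_diff, Set.mem_singleton_iff]
  constructor
  · intro hj
    by_cases hh : p j = α
    · exact Or.inl hh
    · exact Or.inr ⟨hj, hh⟩
  · rintro (rfl | ⟨hj, _⟩)
    · exact le_refl _
    · exact hj

end Stmt15Birkhoff

/-- If `(Λ,p)` and `(Ω,q)` are equivalent multifoliate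
structures on `{1,…,n}`, there are an order isomorphism `ω : Λ → Ω` and a
permutation `σ` with `q = ω ∘ p ∘ σ`; in particular corresponding fibers of
`p` and `q` have the same cardinality. -/
theorem stmt_15 {n : ℕ} {Λ Ω : Type} [PartialOrder Λ] [PartialOrder Ω]
    [Finite Λ] [Finite Ω]
    (p : Fin n → Λ) (q : Fin n → Ω)
    (hp : Function.Surjective p) (hq : Function.Surjective q)
    (h : MFEquiv p q) :
    ∃ (ω : Λ ≃o Ω) (σ : Equiv.Perm (Fin n)),
      (∀ i : Fin n, q i = ω (p (σ i))) ∧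
      ∀ α : Λ, Nat.card {i : Fin n // p i = α} =
        Nat.card {i : Fin n // q i = ω α} := by
  classical
  obtain ⟨φ, hbij⟩ := h
  -- the reverse conjugation is surjective onto `GLmf p`
  have hsurj' : Set.SurjOn (fun f => (φ.trans f).trans φ.symm) (GLmf q) (GLmf p) := by
    intro f hf
    refine ⟨(φ.symm.trans f).trans φ, hbij.mapsTo hf, ?_⟩
    ext x
    simp
  -- classification of images of coordinate subspaces
  have hcls : ∀ U : Set Λ, IsUpperSet U →
      ∃ V : Set Ω, IsUpperSet V ∧
        Submodule.map (φ : (Fin n → ℝ) →ₗ[ℝ] (Fin n → ℝ)) (KUx p U) = KUx q V := by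
    intro U hU
    obtain ⟨V, hV1, hV2⟩ := isInvt_eq_KUx hq (invt_map φ hbij.surjOn (isInvt_KUx hU))
    exact ⟨V, hV1, hV2⟩
  have hcls' : ∀ V : Set Ω, IsUpperSet V →
      ∃ U : Set Λ, IsUpperSet U ∧
        Submodule.map (φ.symm : (Fin n → ℝ) →ₗ[ℝ] (Fin n → ℝ)) (KUx q V) = KUx p U := by
    intro V hV
    have hKV : IsInvt p (Submodule.map (φ.symm : (Fin n → ℝ) →ₗ[ℝ] (Fin n → ℝ)) (KUx q V)) := by
      have := invt_map (φ.symm) hsurj' (isInvt_KUx hV)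
      convert this using 2
    obtain ⟨U, hU1, hU2⟩ := isInvt_eq_KUx hp hKV
    exact ⟨U, hU1, hU2⟩
  choose Φ0 hΦ0up hΦ0eq using hcls
  choose Ψ0 hΨ0up hΨ0eq using hcls'
  let Φ : Set Λ → Set Ω := fun U => if hU : IsUpperSet U then Φ0 U hU else ∅
  let Ψ : Set Ω → Set Λ := fun V => if hV : IsUpperSet V then Ψ0 V hV else ∅
  have hΦup : ∀ U, IsUpperSet U → IsUpperSet (Φ U) := fun U hU => by
    simp only [Φ, dif_pos hU]; exact hΦ0up U hU
  have hΨup : ∀ V, IsUpperSet V → IsUpperSet (Ψ V) := fun V hV => by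
    simp only [Ψ, dif_pos hV]; exact hΨ0up V hV
  have hΦeq : ∀ U, IsUpperSet U →
      Submodule.map (φ : (Fin n → ℝ) →ₗ[ℝ] (Fin n → ℝ)) (KUx p U) = KUx q (Φ U) :=
    fun U hU => by simp only [Φ, dif_pos hU]; exact hΦ0eq U hU
  have hΨeq : ∀ V, IsUpperSet V →
      Submodule.map (φ.symm : (Fin n → ℝ) →ₗ[ℝ] (Fin n → ℝ)) (KUx q V) = KUx p (Ψ V) :=
    fun V hV => by simp only [Ψ, dif_pos hV]; exact hΨ0eq V hV
  have hΨΦ : ∀ U, IsUpperSet U → Ψ (Φ U) = U := by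
    intro U hU
    apply KUx_inj hp
    rw [← hΨeq _ (hΦup U hU), ← hΦeq U hU, map_symm_map_eq]
  have hΦΨ : ∀ V, IsUpperSet V → Φ (Ψ V) = V := by
    intro V hV
    apply KUx_inj hq
    have := map_symm_map_eq φ.symm (KUx q V)
    rw [← hΦeq _ (hΨup V hV), ← hΨeq V hV]
    simpa using this
  have hmonoΦ : ∀ U U', IsUpperSet U → IsUpperSet U' → U ⊆ U' → Φ U ⊆ Φ U' := by
    intro U U' hU hU' hss
    have h1 : KUx p U ≤ KUx p U' := (KUx_le_iff hp).mpr hss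
    have h2 := Submodule.map_mono (f := (φ : (Fin n → ℝ) →ₗ[ℝ] (Fin n → ℝ))) h1
    rw [hΦeq U hU, hΦeq U' hU'] at h2
    exact (KUx_le_iff hq).mp h2
  have hmonoΨ : ∀ V V', IsUpperSet V → IsUpperSet V' → V ⊆ V' → Ψ V ⊆ Ψ V' := by
    intro V V' hV hV' hss
    have h1 : KUx q V ≤ KUx q V' := (KUx_le_iff hq).mpr hss
    have h2 := Submodule.map_mono (f := (φ.symm : (Fin n → ℝ) →ₗ[ℝ] (Fin n → ℝ))) h1
    rw [hΨeq V hV, hΨeq V' hV'] at h2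
    exact (KUx_le_iff hp).mp h2
  have gp : UGoodPair Φ Ψ := ⟨hΦup, hΨup, hΨΦ, hΦΨ, hmonoΦ, hmonoΨ⟩
  choose ω hω using fun α : Λ => gp.principal α
  choose ω' hω' using fun β : Ω => gp.symm.principal β
  have hli : ∀ α, ω' (ω α) = α := by
    intro α
    have h1 : Set.Ici (ω' (ω α)) = Set.Ici α := by
      rw [← hω' (ω α), ← hω α, hΨΦ _ (isUpperSet_Ici α)]
    exact Set.Ici_injective h1
  have hri : ∀ β, ω (ω' β) = β := by
    intro β
    have h1 : Set.Ici (ω (ω' β)) = Set.Ici β := by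
      rw [← hω (ω' β), ← hω' β, hΦΨ _ (isUpperSet_Ici β)]
    exact Set.Ici_injective h1
  have hmord : ∀ a b : Λ, ω a ≤ ω b ↔ a ≤ b := by
    intro a b
    constructor
    · intro hab
      have h1 : Set.Ici (ω b) ⊆ Set.Ici (ω a) := Set.Ici_subset_Ici.mpr hab
      rw [← hω a, ← hω b] at h1
      exact Set.Ici_subset_Ici.mp
        ((gp.subset_iff (isUpperSet_Ici b) (isUpperSet_Ici a)).mp h1)
    · intro hab
      have h1 : Set.Ici b ⊆ Set.Ici a := Set.Ici_subset_Ici.mpr hab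
      have h2 := gp.mono1 _ _ (isUpperSet_Ici b) (isUpperSet_Ici a) h1
      rw [hω a, hω b] at h2
      exact Set.Ici_subset_Ici.mp h2
  let ωiso : Λ ≃o Ω := ⟨⟨ω, ω', hli, hri⟩, by intro a b; exact hmord a b⟩
  -- cardinality of corresponding fibers
  have hcard : ∀ α : Λ, Nat.card {i : Fin n // p i = α} =
      Nat.card {i : Fin n // q i = ω α} := by
    intro α
    have e1 : Nat.card {j : Fin n // p j ∈ Set.Ici α} =
        Nat.card {i : Fin n // q i ∈ Set.Ici (ω α)} := by
      have heq : Submodule.map (φ : (Fin n → ℝ) →ₗ[ℝ] (Fin n → ℝ)) (KUx p (Set.Ici α)) =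
          KUx q (Set.Ici (ω α)) := by
        rw [hΦeq _ (isUpperSet_Ici α), hω α]
      exact card_index_eq
        ((φ.submoduleMap (KUx p (Set.Ici α))).trans (LinearEquiv.ofEq _ _ heq))
    have hpunc : Φ (Set.Ici α \ {α}) = Set.Ici (ω α) \ {ω α} := gp.punctured (hω α)
    have hupd : IsUpperSet (Set.Ici α \ {α}) := by
      rintro x y hxy ⟨hx, hx'⟩
      refine ⟨le_trans hx hxy, ?_⟩
      intro hy
      rw [Set.mem_singleton_iff] at hy
      subst hy
      exact hx' (by simpa using le_antisymm hxy hx)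
    have e2 : Nat.card {j : Fin n // p j ∈ Set.Ici α \ {α}} =
        Nat.card {i : Fin n // q i ∈ Set.Ici (ω α) \ {ω α}} := by
      have heq : Submodule.map (φ : (Fin n → ℝ) →ₗ[ℝ] (Fin n → ℝ))
          (KUx p (Set.Ici α \ {α})) = KUx q (Set.Ici (ω α) \ {ω α}) := by
        rw [hΦeq _ hupd, hpunc]
      exact card_index_eq
        ((φ.submoduleMap (KUx p (Set.Ici α \ {α}))).trans (LinearEquiv.ofEq _ _ heq))
    have d1 := fiber_count p α
    have d2 := fiber_count q (ω α)
    omega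
  -- build the permutation from the fiberwise bijections
  have hcard' : ∀ β : Ω, Nat.card {i : Fin n // q i = β} =
      Nat.card {j : Fin n // p j = ω' β} := by
    intro β
    have h1 := hcard (ω' β)
    rw [hri β] at h1
    exact h1.symm
  have F : ∀ β : Ω, {i : Fin n // q i = β} ≃ {j : Fin n // p j = ω' β} :=
    fun β => (Finite.card_eq.mp (hcard' β)).some
  let t : Fin n → Fin n := fun i => (F (q i) ⟨i, rfl⟩).1
  have ht : ∀ i, p (t i) = ω' (q i) := fun i => (F (q i) ⟨i, rfl⟩).2
  have hinj : Function.Injective t := by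
    intro a b hab
    have h1 : q a = q b := by
      have h0 : ω' (q a) = ω' (q b) := by rw [← ht a, ← ht b, hab]
      have := congrArg ω h0
      rwa [hri, hri] at this
    have h2 : t b = ((F (q a)) ⟨b, h1.symm⟩).1 := by
      have hgen : ∀ (β γ : Ω) (hbq : q b = β) (hbq' : q b = γ), β = γ →
          ((F β) ⟨b, hbq⟩).1 = ((F γ) ⟨b, hbq'⟩).1 := by
        rintro β γ hbq hbq' rfl
        rfl
      exact hgen (q b) (q a) rfl h1.symm h1.symm
    have h3 : (F (q a)) ⟨a, rfl⟩ = (F (q a)) ⟨b, h1.symm⟩ :=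
      Subtype.ext (hab.trans h2)
    have h4 := (F (q a)).injective h3
    exact congrArg Subtype.val h4
  let σ : Equiv.Perm (Fin n) := Equiv.ofBijective t (Finite.injective_iff_bijective.mp hinj)
  refine ⟨ωiso, σ, fun i => ?_, hcard⟩
  have h5 : p (σ i) = ω' (q i) := ht i
  rw [show (ωiso : Λ → Ω) (p (σ i)) = ω (p (σ i)) from rfl, h5, hri]
end

section
/- Let ξ = (L_α, ξ_α^β, Λ, L) be a finite complete projective system of vector spaces. If W ⊆ L* is a linear subspace such that f*(W) ⊆ W for every f ∈ GL(ξ), then W = (ker ξ_α)⁰ for some α ∈ Λ, where (ker ξ_α)⁰ denotes the annihilator of ker ξ_α in L*. -/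
/-- For a finite complete projective system, every subspace of
`L*` invariant under all dual maps `f*`, `f ∈ GL(ξ)`, is the annihilator of
the kernel of some canonical projection. -/
theorem stmt_17 {Λ : Type} [PartialOrder Λ] [Finite Λ] (ξ : ProjSys Λ)
    (hsurj : ∀ α : Λ, Function.Surjective (ξ.proj α))
    (hc : ξ.Complete)
    (W : Submodule ℝ (Module.Dual ℝ ↥ξ.limSub))
    (hW : ∀ f ∈ ξ.GLset, ∀ φ ∈ W,
      (f : ↥ξ.limSub →ₗ[ℝ] ↥ξ.limSub).dualMap φ ∈ W) :
    ∃ α : Λ, W = (LinearMap.ker (ξ.proj α)).dualAnnihilator := by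
  have := Fintype.ofFinite Λ
  have hfd : FiniteDimensional ℝ ↥ξ.limSub := by
    have : FiniteDimensional ℝ (∀ α, ξ.L α) := inferInstance
    exact FiniteDimensional.finiteDimensional_submodule ξ.limSub
  set K := W.dualCoannihilator with hK
  have hinv : ξ.Invariant K := by
    intro f hf x hx
    rw [Submodule.mem_dualCoannihilator] at hx ⊢
    intro φ hφ
    have := hW f hf φ hφ
    have h0 := hx _ this
    simpa using h0
  obtain ⟨α, hα⟩ := hc K hinv inferInstance
  refine ⟨α, ?_⟩
  rw [← hα, hK, Subspace.dualCoannihilator_dualAnnihilator_eq]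
end
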